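/- arXiv:2508.00084 — 5 statements merged into one kernel-verified Lean document; each statement's English description precedes it below -/
import Mathlib

section
/- Let F be a field of characteristic ≠ 2 and T = [t_{ij}] a strictly lower triangular n×n matrix over F. Let A(T) be the commutative unital F-algebra generated by X_1,…,X_n subject to X_1² = 0 and X_i² = ∑_{j<i} t_{ij} X_j X_i for 2 ≤ i ≤ n. Then the set {X_1^{a_1} ⋯ X_n^{a_n} : a_i ∈ {0,1}} is an F-basis of A(T); in particular dim_F A(T) = 2^n. -/
open MvPolynomial

noncomputable section

variable (F : Type) [Field F]

/-- The defining relations of the nil graded algebra `A(T)`. -/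
def relSet {n : ℕ} (T : Matrix (Fin n) (Fin n) F) : Set (MvPolynomial (Fin n) F) :=
  { p | ∃ i : Fin n,
      p = X i ^ 2 - ∑ j ∈ Finset.univ.filter (fun j => j < i), C (T i j) * X j * X i }

/-- The nil graded algebra `A(T)` associated to a strictly lower triangular matrix `T`. -/
abbrev NTAlg {n : ℕ} (T : Matrix (Fin n) (Fin n) F) : Type :=
  MvPolynomial (Fin n) F ⧸ Ideal.span (relSet F T)

/-- The generators `X i` of `A(T)`. -/
def NTgen {n : ℕ} (T : Matrix (Fin n) (Fin n) F) (i : Fin n) : NTAlg F T :=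
  Ideal.Quotient.mk _ (X i)

/-- An algebra isomorphism is degree preserving iff it (and its inverse) maps the span
of the degree-2 generators into the span of the degree-2 generators. -/
def IsGradedIso {n : ℕ} {T S : Matrix (Fin n) (Fin n) F}
    (e : NTAlg F T ≃ₐ[F] NTAlg F S) : Prop :=
  (∀ j, e (NTgen F T j) ∈ Submodule.span F (Set.range (NTgen F S))) ∧
  (∀ j, e.symm (NTgen F S j) ∈ Submodule.span F (Set.range (NTgen F T)))

/-- `A(T)` and `A(S)` are isomorphic in the category 𝒩𝒯. -/
def NTIso {n : ℕ} (T S : Matrix (Fin n) (Fin n) F) : Prop :=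
  ∃ e : NTAlg F T ≃ₐ[F] NTAlg F S, IsGradedIso F e

/-- A matrix is strictly lower triangular. -/
def SLTM {n : ℕ} (T : Matrix (Fin n) (Fin n) F) : Prop :=
  ∀ i j : Fin n, i ≤ j → T i j = 0

/-- The key system of equations (Theorem `theo-Key-condition`). -/
def KeyEq {n : ℕ} (T S Γ : Matrix (Fin n) (Fin n) F) : Prop :=
  ∀ r i k : Fin n, i < k →
    2 * Γ i r * Γ k r + Γ k r ^ 2 * S k i =
      ∑ j ∈ Finset.univ.filter (fun j => j < r),
        T r j * (Γ k j * Γ k r * S k i + Γ k j * Γ i r + Γ i j * Γ k r)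

/-- Recursive action of generators on the free module with basis `Fin n → Bool`. -/
def fa {n : ℕ} (T : Matrix (Fin n) (Fin n) F) : Fin n → (Fin n → Bool) → ((Fin n → Bool) →₀ F)
  | i => fun a =>
    if a i then
      ∑ j ∈ (Finset.univ.filter (fun j => j < i)).attach, T i j.1 • fa T j.1 a
    else Finsupp.single (Function.update a i true) 1
  termination_by i => i.1
  decreasing_by
    have := j.2
    simp only [Finset.mem_filter, Finset.mem_univ, true_and] at this
    exact this

lemma fa_false {n : ℕ} (T : Matrix (Fin n) (Fin n) F) {i : Fin n} {a : Fin n → Bool}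
    (h : a i = false) : fa F T i a = Finsupp.single (Function.update a i true) 1 := by
  rw [fa]; simp [h]

lemma fa_true {n : ℕ} (T : Matrix (Fin n) (Fin n) F) {i : Fin n} {a : Fin n → Bool}
    (h : a i = true) :
    fa F T i a = ∑ j ∈ Finset.univ.filter (fun j => j < i), T i j • fa F T j a := by
  rw [fa]; simp only [h, if_true]
  exact Finset.sum_attach _ (fun j => T i j • fa F T j a)

/-- The operator by which `X i` acts. -/
def Mop {n : ℕ} (T : Matrix (Fin n) (Fin n) F) (i : Fin n) :
    Module.End F ((Fin n → Bool) →₀ F) :=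
  Finsupp.linearCombination F (fa F T i)

lemma Mop_single {n : ℕ} (T : Matrix (Fin n) (Fin n) F) (i : Fin n) (a : Fin n → Bool) :
    Mop F T i (Finsupp.single a 1) = fa F T i a := by
  simp [Mop, Finsupp.linearCombination_single]

lemma Mop_comm_aux {n : ℕ} (T : Matrix (Fin n) (Fin n) F) :
    ∀ (i k : Fin n) (a : Fin n → Bool),
      Mop F T i (fa F T k a) = Mop F T k (fa F T i a) := by
  suffices H : ∀ s : ℕ, ∀ i k : Fin n, ∀ a, i.1 + k.1 = s →
      Mop F T i (fa F T k a) = Mop F T k (fa F T i a) from fun i k a => H _ i k a rfl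
  intro s
  induction s using Nat.strong_induction_on with
  | _ s IH =>
    have base : ∀ (i k : Fin n) (a : Fin n → Bool), i.1 + k.1 = s → a k = false →
        Mop F T i (fa F T k a) = Mop F T k (fa F T i a) := by
      intro i k a hs hak
      by_cases hik : i = k
      · subst hik; rfl
      rw [fa_false F T hak, Mop_single]
      cases hai : a i with
      | false =>
        rw [fa_false F T hai, Mop_single, fa_false, fa_false]
        · rw [Function.update_comm hik]
        · rw [Function.update_of_ne (Ne.symm hik)]; exact hak
        · rw [Function.update_of_ne hik]; exact hai
      | true =>
        have hai' : (Function.update a k true) i = true := by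
          rw [Function.update_of_ne hik]; exact hai
        rw [fa_true F T hai', fa_true F T hai, map_sum]
        refine Finset.sum_congr rfl fun j hj => ?_
        simp only [Finset.mem_filter, Finset.mem_univ, true_and] at hj
        rw [map_smul]
        congr 1
        rw [(IH (j.1 + k.1) (by omega) j k a rfl).symm, fa_false F T hak, Mop_single]
    intro i k a hs
    by_cases hak : a k = false
    · exact base i k a hs hak
    by_cases hai : a i = false
    · exact (base k i a (by omega) hai).symm
    rw [Bool.not_eq_false] at hai hak
    rw [fa_true F T hak, fa_true F T hai, map_sum, map_sum]
    have expand1 : ∀ l ∈ Finset.univ.filter (fun l => l < k),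
        Mop F T i (T k l • fa F T l a) =
          ∑ j ∈ Finset.univ.filter (fun j => j < i),
            (T k l * T i j) • Mop F T j (fa F T l a) := by
      intro l hl
      simp only [Finset.mem_filter, Finset.mem_univ, true_and] at hl
      rw [map_smul, IH (i.1 + l.1) (by omega) i l a rfl, fa_true F T hai, map_sum,
        Finset.smul_sum]
      refine Finset.sum_congr rfl fun j hj => ?_
      simp only [Finset.mem_filter, Finset.mem_univ, true_and] at hj
      rw [map_smul, IH (l.1 + j.1) (by omega) l j a rfl, smul_smul]
    have expand2 : ∀ j ∈ Finset.univ.filter (fun j => j < i),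
        Mop F T k (T i j • fa F T j a) =
          ∑ l ∈ Finset.univ.filter (fun l => l < k),
            (T k l * T i j) • Mop F T j (fa F T l a) := by
      intro j hj
      simp only [Finset.mem_filter, Finset.mem_univ, true_and] at hj
      rw [map_smul, (IH (j.1 + k.1) (by omega) j k a rfl).symm, fa_true F T hak, map_sum,
        Finset.smul_sum]
      refine Finset.sum_congr rfl fun l hl => ?_
      rw [map_smul, smul_smul, mul_comm (T i j) (T k l)]
    rw [Finset.sum_congr rfl expand1, Finset.sum_congr rfl expand2, Finset.sum_comm]

lemma Mop_comm {n : ℕ} (T : Matrix (Fin n) (Fin n) F) (i k : Fin n) :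
    Mop F T i * Mop F T k = Mop F T k * Mop F T i := by
  apply Finsupp.lhom_ext
  intro a b
  have hb : Finsupp.single a b = b • Finsupp.single a (1 : F) := by
    rw [Finsupp.smul_single, smul_eq_mul, mul_one]
  simp only [Module.End.mul_apply, hb, map_smul, Mop_single]
  rw [Mop_comm_aux]

lemma Mop_rel {n : ℕ} (T : Matrix (Fin n) (Fin n) F) (i : Fin n) :
    Mop F T i * Mop F T i =
      ∑ j ∈ Finset.univ.filter (fun j => j < i), T i j • (Mop F T j * Mop F T i) := by
  apply Finsupp.lhom_ext
  intro a b
  have hb : Finsupp.single a b = b • Finsupp.single a (1 : F) := by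
    rw [Finsupp.smul_single, smul_eq_mul, mul_one]
  rw [hb, map_smul, map_smul]
  congr 1
  rw [LinearMap.sum_apply]
  simp only [Module.End.mul_apply, LinearMap.smul_apply, Mop_single]
  cases hai : a i with
  | false =>
    rw [fa_false F T hai, Mop_single]
    have : (Function.update a i true) i = true := by simp
    rw [fa_true F T this]
    refine Finset.sum_congr rfl fun j hj => ?_
    rw [Mop_single]
  | true =>
    rw [fa_true F T hai, map_sum]
    refine Finset.sum_congr rfl fun j hj => ?_
    rw [map_smul]
    congr 1
    rw [Mop_comm_aux, fa_true F T hai]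


/-- The commuting monoid homomorphism on exponents. -/
def muHom {n : ℕ} (T : Matrix (Fin n) (Fin n) F) :
    Multiplicative (Fin n →₀ ℕ) →* Module.End F ((Fin n → Bool) →₀ F) :=
  (MonoidHom.noncommPiCoprod
      (fun i => powersHom (Module.End F ((Fin n → Bool) →₀ F)) (Mop F T i))
      (fun i j _ x y => Commute.pow_pow (Mop_comm F T i j) _ _)).comp
    (((AddEquiv.toMultiplicative
        { Finsupp.equivFunOnFinite with map_add' := fun _ _ => rfl }).trans
      (MulEquiv.piMultiplicative fun _ => ℕ)).toMonoidHom)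

lemma muHom_X {n : ℕ} (T : Matrix (Fin n) (Fin n) F) (i : Fin n) :
    muHom F T (Multiplicative.ofAdd (Finsupp.single i 1)) = Mop F T i := by
  have key : (((AddEquiv.toMultiplicative
        ({ Finsupp.equivFunOnFinite with map_add' := fun _ _ => rfl } :
          (Fin n →₀ ℕ) ≃+ (Fin n → ℕ))).trans
      (MulEquiv.piMultiplicative fun _ => ℕ)))
      (Multiplicative.ofAdd (Finsupp.single i 1)) =
      Pi.mulSingle i (Multiplicative.ofAdd 1) := by
    funext j
    by_cases h : j = i
    · subst h; simp [MulEquiv.piMultiplicative, AddEquiv.toMultiplicative,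
        Pi.mulSingle, Finsupp.single_apply]
      exact Finsupp.single_eq_same
    · simp [MulEquiv.piMultiplicative, AddEquiv.toMultiplicative,
        Pi.mulSingle, Function.update_of_ne h, Finsupp.single_apply,
        Ne.symm h, h]
      show Finsupp.single i (1 : ℕ) j = 0
      simp [Finsupp.single_apply, Ne.symm h]
  rw [muHom, MonoidHom.comp_apply, MulEquiv.coe_toMonoidHom, key]
  erw [MonoidHom.noncommPiCoprod_mulSingle]
  simp [powersHom]

/-- The representation of the polynomial ring. -/
def Phi {n : ℕ} (T : Matrix (Fin n) (Fin n) F) :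
    MvPolynomial (Fin n) F →ₐ[F] Module.End F ((Fin n → Bool) →₀ F) :=
  AddMonoidAlgebra.lift F _ (Fin n →₀ ℕ) (muHom F T)

lemma Phi_X {n : ℕ} (T : Matrix (Fin n) (Fin n) F) (i : Fin n) :
    Phi F T (X i) = Mop F T i := by
  have hx : (X i : MvPolynomial (Fin n) F) =
      AddMonoidAlgebra.single (Finsupp.single i 1) 1 := by
    rw [single_eq_monomial]; rfl
  rw [Phi, hx]
  erw [AddMonoidAlgebra.lift_single]
  rw [one_smul, muHom_X]

lemma Phi_rel {n : ℕ} (T : Matrix (Fin n) (Fin n) F) :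
    ∀ p ∈ Ideal.span (relSet F T), Phi F T p = 0 := by
  have hgen : ∀ p ∈ relSet F T, Phi F T p = 0 := by
    rintro p ⟨i, rfl⟩
    rw [map_sub, map_pow, Phi_X, map_sum]
    have : ∀ j ∈ Finset.univ.filter (fun j => j < i),
        Phi F T (C (T i j) * X j * X i) = T i j • (Mop F T j * Mop F T i) := by
      intro j hj
      rw [mul_assoc, ← smul_eq_C_mul, map_smul, map_mul, Phi_X, Phi_X]
    rw [Finset.sum_congr rfl this, pow_two, Mop_rel, sub_self]
  intro p hp
  have hle : Ideal.span (relSet F T) ≤ RingHom.ker (Phi F T).toRingHom :=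
    Ideal.span_le.mpr fun q hq => by
      simp only [SetLike.mem_coe, RingHom.mem_ker, AlgHom.toRingHom_eq_coe,
        RingHom.coe_coe]
      exact hgen q hq
  exact hle hp

/-- The induced representation of `A(T)`. -/
def Phibar {n : ℕ} (T : Matrix (Fin n) (Fin n) F) :
    NTAlg F T →ₐ[F] Module.End F ((Fin n → Bool) →₀ F) :=
  Ideal.Quotient.liftₐ _ (Phi F T) (Phi_rel F T)

lemma Phibar_mk {n : ℕ} (T : Matrix (Fin n) (Fin n) F) (p : MvPolynomial (Fin n) F) :
    Phibar F T (Ideal.Quotient.mk _ p) = Phi F T p := by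
  simp [Phibar, Ideal.Quotient.liftₐ_apply]
  exact Ideal.Quotient.lift_mk _ _ _

/-- Evaluation at the vacuum vector. -/
def Lmap {n : ℕ} (T : Matrix (Fin n) (Fin n) F) :
    NTAlg F T →ₗ[F] ((Fin n → Bool) →₀ F) where
  toFun v := Phibar F T v (Finsupp.single (fun _ => false) 1)
  map_add' x y := by simp
  map_smul' c x := by simp

lemma Lmap_apply {n : ℕ} (T : Matrix (Fin n) (Fin n) F) (v : NTAlg F T) :
    Lmap F T v = Phibar F T v (Finsupp.single (fun _ => false) 1) := rfl

lemma Phi_prod_apply {n : ℕ} (T : Matrix (Fin n) (Fin n) F) (s : Finset (Fin n)) :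
    ∀ a b : Fin n → Bool, (∀ i ∈ s, a i = true → b i = false) →
    Phi F T (∏ i ∈ s, if a i then (X i : MvPolynomial (Fin n) F) else 1)
        (Finsupp.single b 1) =
      Finsupp.single (fun i => b i || (a i && decide (i ∈ s))) 1 := by
  induction s using Finset.induction_on with
  | empty =>
    intro a b _
    rw [Finset.prod_empty, map_one, Module.End.one_apply]
    congr 1
    funext i
    simp
  | @insert j s hj ih =>
    intro a b hyp
    rw [Finset.prod_insert hj, map_mul, Module.End.mul_apply,
      ih a b (fun i hi hai => hyp i (Finset.mem_insert_of_mem hi) hai)]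
    set b' : Fin n → Bool := fun i => b i || (a i && decide (i ∈ s)) with hb'
    cases haj : a j with
    | false =>
      rw [if_neg (by simp), map_one, Module.End.one_apply]
      congr 1
      funext i
      by_cases hij : i = j
      · subst hij; simp [hb', haj]
      · simp [hb', Finset.mem_insert, hij]
    | true =>
      have hbj' : b' j = false := by
        simp [hb', haj, hj, hyp j (Finset.mem_insert_self j s) haj]
      rw [if_pos rfl, Phi_X, Mop_single, fa_false F T hbj']
      congr 1
      funext i
      by_cases hij : i = j
      · subst hij; simp [haj]
      · rw [Function.update_of_ne hij]
        simp [hb', Finset.mem_insert, hij]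

lemma Lmap_fam {n : ℕ} (T : Matrix (Fin n) (Fin n) F) (a : Fin n → Bool) :
    Lmap F T (∏ i : Fin n, if a i then NTgen F T i else 1) = Finsupp.single a 1 := by
  have h1 : (∏ i : Fin n, if a i then NTgen F T i else 1) =
      Ideal.Quotient.mk _ (∏ i : Fin n, if a i then (X i : MvPolynomial (Fin n) F) else 1) := by
    rw [map_prod]
    refine Finset.prod_congr rfl fun i _ => ?_
    rw [apply_ite (Ideal.Quotient.mk (Ideal.span (relSet F T))), map_one]
    rfl
  rw [h1, Lmap_apply, Phibar_mk,
    Phi_prod_apply F T Finset.univ a _ (fun _ _ _ => rfl)]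
  congr 1
  funext i
  simp

lemma fam_indep {n : ℕ} (T : Matrix (Fin n) (Fin n) F) :
    LinearIndependent F
      (fun a : Fin n → Bool => ∏ i : Fin n, if a i then NTgen F T i else 1) := by
  apply LinearIndependent.of_comp (Lmap F T)
  have h2 : LinearIndependent F (fun a : Fin n → Bool => Finsupp.single a (1 : F)) := by
    have := (Finsupp.basisSingleOne (R := F) (ι := Fin n → Bool)).linearIndependent
    rwa [Finsupp.coe_basisSingleOne] at this
  have h3 : (Lmap F T ∘ fun a : Fin n → Bool => ∏ i : Fin n, if a i then NTgen F T i else 1) =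
      fun a : Fin n → Bool => Finsupp.single a (1 : F) := by
    funext a
    exact Lmap_fam F T a
  rw [h3]
  exact h2

lemma mk_sq {n : ℕ} (T : Matrix (Fin n) (Fin n) F) (i : Fin n) :
    Ideal.Quotient.mk (Ideal.span (relSet F T)) (X i ^ 2) =
      Ideal.Quotient.mk _ (∑ j ∈ Finset.univ.filter (fun j => j < i), C (T i j) * X j * X i) := by
  rw [Ideal.Quotient.eq]
  exact Ideal.subset_span ⟨i, rfl⟩

lemma mulX_prod {n : ℕ} (q : Fin n → ℕ) (j : Fin n) :
    (X j : MvPolynomial (Fin n) F) * ∏ k : Fin n, X k ^ q k =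
      ∏ k : Fin n, (X k : MvPolynomial (Fin n) F) ^ (Function.update q j (q j + 1)) k := by
  rw [← Finset.mul_prod_erase Finset.univ _ (Finset.mem_univ j),
    ← Finset.mul_prod_erase Finset.univ
      (fun k => (X k : MvPolynomial (Fin n) F) ^ (Function.update q j (q j + 1)) k)
      (Finset.mem_univ j), Function.update_self]
  have : ∏ k ∈ Finset.univ.erase j, (X k : MvPolynomial (Fin n) F) ^ (Function.update q j (q j + 1)) k
      = ∏ k ∈ Finset.univ.erase j, (X k : MvPolynomial (Fin n) F) ^ q k :=
    Finset.prod_congr rfl fun k hk => by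
      rw [Function.update_of_ne (Finset.ne_of_mem_erase hk)]
  rw [this, pow_succ]
  ring

set_option synthInstance.maxHeartbeats 1000000 in
set_option maxHeartbeats 1000000 in
lemma mono_span {n : ℕ} (T : Matrix (Fin n) (Fin n) F) (m : Fin n → ℕ) :
    Ideal.Quotient.mk (Ideal.span (relSet F T)) (∏ i : Fin n, X i ^ m i) ∈
      Submodule.span F
        (Set.range (fun a : Fin n → Bool => ∏ i : Fin n, if a i then NTgen F T i else 1)) := by
  generalize hw : (∑ i : Fin n, m i * 2 ^ (i.1 + 1)) = w
  induction w using Nat.strong_induction_on generalizing m with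
  | _ w IH =>
  by_cases hsf : ∀ i, m i ≤ 1
  · -- square-free monomial: it is one of the generators
    apply Submodule.subset_span
    refine ⟨fun i => decide (m i = 1), ?_⟩
    have h1 : (∏ i : Fin n, if decide (m i = 1) then NTgen F T i else 1) =
        Ideal.Quotient.mk (Ideal.span (relSet F T))
          (∏ i : Fin n, if decide (m i = 1) then (X i : MvPolynomial (Fin n) F) else 1) := by
      rw [map_prod]
      refine Finset.prod_congr rfl fun i _ => ?_
      rw [apply_ite (Ideal.Quotient.mk (Ideal.span (relSet F T))), map_one]
      rfl
    show (∏ i : Fin n, if decide (m i = 1) then NTgen F T i else 1) =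
      Ideal.Quotient.mk (Ideal.span (relSet F T)) (∏ i : Fin n, X i ^ m i)
    rw [h1]
    congr 1
    refine Finset.prod_congr rfl fun i _ => ?_
    rcases Nat.le_one_iff_eq_zero_or_eq_one.mp (hsf i) with h | h <;> simp [h]
  · push_neg at hsf
    obtain ⟨i, hi⟩ := hsf
    have h2i : 2 ≤ m i := hi
    set m' : Fin n → ℕ := Function.update m i (m i - 2) with hm'
    have hfact : (∏ k : Fin n, (X k : MvPolynomial (Fin n) F) ^ m k) =
        X i ^ 2 * ∏ k : Fin n, X k ^ m' k := by
      rw [← Finset.mul_prod_erase Finset.univ (fun k => (X k : MvPolynomial (Fin n) F) ^ m k)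
          (Finset.mem_univ i),
        ← Finset.mul_prod_erase Finset.univ (fun k => (X k : MvPolynomial (Fin n) F) ^ m' k)
          (Finset.mem_univ i)]
      have he : ∏ k ∈ Finset.univ.erase i, (X k : MvPolynomial (Fin n) F) ^ m' k =
          ∏ k ∈ Finset.univ.erase i, (X k : MvPolynomial (Fin n) F) ^ m k :=
        Finset.prod_congr rfl fun k hk => by
          rw [hm', Function.update_of_ne (Finset.ne_of_mem_erase hk)]
      rw [he, hm', Function.update_self, ← mul_assoc, ← pow_add]
      congr 2
      omega
    rw [hfact, map_mul, mk_sq,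
      map_sum (Ideal.Quotient.mk (Ideal.span (relSet F T)))
        (fun j => C (T i j) * X j * X i) (Finset.univ.filter (fun j => j < i)),
      Finset.sum_mul]
    apply Submodule.sum_mem
    intro j hj
    simp only [Finset.mem_filter, Finset.mem_univ, true_and] at hj
    have hne : j ≠ i := ne_of_lt hj
    set q : Fin n → ℕ := Function.update (Function.update m' i (m' i + 1)) j
        ((Function.update m' i (m' i + 1)) j + 1) with hq
    have hterm : (Ideal.Quotient.mk (Ideal.span (relSet F T)) (C (T i j) * X j * X i)) *
        Ideal.Quotient.mk _ (∏ k : Fin n, X k ^ m' k) =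
        T i j • Ideal.Quotient.mk _
          (∏ k : Fin n, (X k : MvPolynomial (Fin n) F) ^ q k) := by
      have hsm : T i j • Ideal.Quotient.mk (Ideal.span (relSet F T))
          (∏ k : Fin n, (X k : MvPolynomial (Fin n) F) ^ q k) =
          Ideal.Quotient.mk _ (C (T i j) * ∏ k : Fin n, X k ^ q k) := by
        rw [← smul_eq_C_mul, ← Ideal.Quotient.mkₐ_eq_mk (R₁ := F), map_smul]
      rw [hsm, ← map_mul]
      congr 1
      have e1 : (X i : MvPolynomial (Fin n) F) * ∏ k : Fin n, X k ^ m' k =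
          ∏ k : Fin n, X k ^ (Function.update m' i (m' i + 1)) k := mulX_prod F m' i
      have e2 : (X j : MvPolynomial (Fin n) F) *
          ∏ k : Fin n, X k ^ (Function.update m' i (m' i + 1)) k =
          ∏ k : Fin n, X k ^ q k := mulX_prod F (Function.update m' i (m' i + 1)) j
      calc C (T i j) * X j * X i * ∏ k : Fin n, (X k : MvPolynomial (Fin n) F) ^ m' k
          = C (T i j) * (X j * (X i * ∏ k : Fin n, X k ^ m' k)) := by ring
        _ = C (T i j) * ∏ k : Fin n, (X k : MvPolynomial (Fin n) F) ^ q k := by rw [e1, e2]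
    rw [hterm]
    apply Submodule.smul_mem
    have hqi : q i = m i - 1 := by
      rw [hq, Function.update_of_ne (Ne.symm hne), Function.update_self, hm',
        Function.update_self]
      omega
    have hqj : q j = m j + 1 := by
      rw [hq, Function.update_self, Function.update_of_ne hne, hm',
        Function.update_of_ne hne]
    have hqk : ∀ k, k ≠ i → k ≠ j → q k = m k := by
      intro k hki hkj
      rw [hq, Function.update_of_ne hkj, Function.update_of_ne hki, hm',
        Function.update_of_ne hki]
    refine IH (∑ k : Fin n, q k * 2 ^ (k.1 + 1)) ?_ q rfl
    subst hw
    have hsplit : ∀ f : Fin n → ℕ, ∑ k : Fin n, f k * 2 ^ (k.1 + 1) =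
        f i * 2 ^ (i.1 + 1) + f j * 2 ^ (j.1 + 1) +
          ∑ k ∈ (Finset.univ.erase i).erase j, f k * 2 ^ (k.1 + 1) := by
      intro f
      rw [← Finset.add_sum_erase Finset.univ _ (Finset.mem_univ i),
        ← Finset.add_sum_erase (Finset.univ.erase i) (fun k => f k * 2 ^ (k.1 + 1))
          (Finset.mem_erase.mpr ⟨hne, Finset.mem_univ j⟩)]
      exact (add_assoc _ _ _).symm
    rw [hsplit q, hsplit m]
    have hsame : ∑ k ∈ (Finset.univ.erase i).erase j, q k * 2 ^ (k.1 + 1) =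
        ∑ k ∈ (Finset.univ.erase i).erase j, m k * 2 ^ (k.1 + 1) :=
      Finset.sum_congr rfl fun k hk => by
        have h1 : k ≠ j := Finset.ne_of_mem_erase hk
        have h2 : k ≠ i := Finset.ne_of_mem_erase (Finset.mem_of_mem_erase hk)
        rw [hqk k h2 h1]
    rw [hsame, hqi, hqj]
    have hWlt : (2 : ℕ) ^ (j.1 + 1) < 2 ^ (i.1 + 1) :=
      Nat.pow_lt_pow_right (by norm_num) (by have : j.1 < i.1 := hj; omega)
    have h3 : m i * 2 ^ (i.1 + 1) = (m i - 1) * 2 ^ (i.1 + 1) + 2 ^ (i.1 + 1) := by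
      have h5 : (m i - 1) + 1 = m i := by omega
      conv_lhs => rw [← h5]
      exact Nat.succ_mul _ _
    have h4 : (m j + 1) * 2 ^ (j.1 + 1) = m j * 2 ^ (j.1 + 1) + 2 ^ (j.1 + 1) :=
      Nat.succ_mul _ _
    rw [h3, h4]
    linarith [hWlt]

set_option synthInstance.maxHeartbeats 1000000 in
set_option maxHeartbeats 1000000 in
lemma fam_span {n : ℕ} (T : Matrix (Fin n) (Fin n) F) :
    Submodule.span F
      (Set.range (fun a : Fin n → Bool => ∏ i : Fin n, if a i then NTgen F T i else 1)) = ⊤ := by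
  rw [eq_top_iff]
  rintro v -
  obtain ⟨p, rfl⟩ := Ideal.Quotient.mk_surjective v
  rw [MvPolynomial.as_sum p,
    map_sum (Ideal.Quotient.mk (Ideal.span (relSet F T)))
      (fun v => monomial v (coeff v p)) p.support]
  apply Submodule.sum_mem
  intro c hc
  have hmono : (monomial c (coeff c p) : MvPolynomial (Fin n) F) =
      C (coeff c p) * ∏ i : Fin n, X i ^ c i := by
    rw [monomial_eq]
    congr 1
    exact Finsupp.prod_fintype _ _ (fun i => pow_zero _)
  rw [hmono, ← smul_eq_C_mul, ← Ideal.Quotient.mkₐ_eq_mk (R₁ := F), map_smul]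
  apply Submodule.smul_mem
  rw [Ideal.Quotient.mkₐ_eq_mk (R₁ := F)]
  exact mono_span F T _

set_option synthInstance.maxHeartbeats 1000000 in
set_option maxHeartbeats 1000000 in
lemma fam_finrank {n : ℕ} (T : Matrix (Fin n) (Fin n) F) :
    Module.finrank F (NTAlg F T) = 2 ^ n := by
  have b : Module.Basis (Fin n → Bool) F (NTAlg F T) :=
    Module.Basis.mk (fam_indep F T) (fam_span F T).ge
  rw [Module.finrank_eq_card_basis b, Fintype.card_fun]
  simp

/-- Theorem (monomial basis): the monomials `∏ Xᵢ^{aᵢ}`, `aᵢ ∈ {0,1}`, form an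
`F`-basis of `A(T)`; in particular `dim_F A(T) = 2^n`. -/
theorem stmt0 {n : ℕ} (h2 : (2 : F) ≠ 0) (T : Matrix (Fin n) (Fin n) F) (hT : SLTM F T) :
    LinearIndependent F
        (fun a : Fin n → Bool => ∏ i : Fin n, if a i then NTgen F T i else 1) ∧
    Submodule.span F
        (Set.range (fun a : Fin n → Bool => ∏ i : Fin n, if a i then NTgen F T i else 1)) = ⊤ ∧
    Module.finrank F (NTAlg F T) = 2 ^ n := by
  exact ⟨fam_indep F T, fam_span F T, fam_finrank F T⟩
end
end

section
/- Over the field ℚ of rational numbers, the family of 4×4 strictly lower triangular matrices T_p with rows (0,0,0,0), (0,0,0,0), (1,1,0,0), (p,1,0,0), where p ranges over the prime natural numbers, gives pairwise non-isomorphic graded algebras A(T_p). In particular, there are infinitely many isomorphism classes of algebras A(T) for 4×4 strictly lower triangular matrices T over ℚ. -/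
open MvPolynomial

noncomputable section

variable (F : Type) [Field F]

namespace Stmt3Aux
def mV (t : ℚ) (v w : Fin 4 → ℚ) : Fin 6 → ℚ := fun i =>
  match i with
  | 0 => v 0 * w 1 + v 1 * w 0
  | 1 => v 0 * w 2 + v 2 * w 0 + v 2 * w 2
  | 2 => v 0 * w 3 + v 3 * w 0 + t * (v 3 * w 3)
  | 3 => v 1 * w 2 + v 2 * w 1 + v 2 * w 2
  | 4 => v 1 * w 3 + v 3 * w 1 + v 3 * w 3
  | 5 => v 2 * w 3 + v 3 * w 2
def Mdl (_t : ℚ) : Type := ℚ × (Fin 4 → ℚ) × (Fin 6 → ℚ)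
variable {t : ℚ}
instance : AddCommGroup (Mdl t) := inferInstanceAs (AddCommGroup (ℚ × (Fin 4 → ℚ) × (Fin 6 → ℚ)))
instance : Module ℚ (Mdl t) := inferInstanceAs (Module ℚ (ℚ × (Fin 4 → ℚ) × (Fin 6 → ℚ)))
instance : Mul (Mdl t) :=
  ⟨fun x y => (x.1 * y.1, x.1 • y.2.1 + y.1 • x.2.1, x.1 • y.2.2 + y.1 • x.2.2 + mV t x.2.1 y.2.1)⟩
instance : One (Mdl t) := ⟨((1 : ℚ), 0, 0)⟩
lemma mul_def (x y : Mdl t) :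
    x * y = (x.1 * y.1, x.1 • y.2.1 + y.1 • x.2.1, x.1 • y.2.2 + y.1 • x.2.2 + mV t x.2.1 y.2.1) :=
  rfl
lemma one_def : (1 : Mdl t) = ((1 : ℚ), 0, 0) := rfl
lemma add_def (x y : Mdl t) : x + y = (x.1 + y.1, x.2.1 + y.2.1, x.2.2 + y.2.2) := rfl
lemma zero_def : (0 : Mdl t) = ((0:ℚ), 0, 0) := rfl
lemma smul_def (r : ℚ) (x : Mdl t) : r • x = (r * x.1, r • x.2.1, r • x.2.2) := rfl
@[simp] lemma mul_fst (x y : Mdl t) : (x * y).1 = x.1 * y.1 := rfl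
@[simp] lemma mul_snd_fst (x y : Mdl t) : (x * y).2.1 = x.1 • y.2.1 + y.1 • x.2.1 := rfl
@[simp] lemma mul_snd_snd (x y : Mdl t) :
    (x * y).2.2 = x.1 • y.2.2 + y.1 • x.2.2 + mV t x.2.1 y.2.1 := rfl
@[simp] lemma add_fst' (x y : Mdl t) : (x + y).1 = x.1 + y.1 := rfl
@[simp] lemma add_snd_fst (x y : Mdl t) : (x + y).2.1 = x.2.1 + y.2.1 := rfl
@[simp] lemma add_snd_snd (x y : Mdl t) : (x + y).2.2 = x.2.2 + y.2.2 := rfl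
@[simp] lemma smul_fst' (r : ℚ) (x : Mdl t) : (r • x).1 = r * x.1 := rfl
@[simp] lemma smul_snd_fst (r : ℚ) (x : Mdl t) : (r • x).2.1 = r • x.2.1 := rfl
@[simp] lemma smul_snd_snd (r : ℚ) (x : Mdl t) : (r • x).2.2 = r • x.2.2 := rfl
@[simp] lemma one_fst' : (1 : Mdl t).1 = 1 := rfl
@[simp] lemma one_snd_fst : (1 : Mdl t).2.1 = 0 := rfl
@[simp] lemma one_snd_snd : (1 : Mdl t).2.2 = 0 := rfl
@[simp] lemma zero_fst' : (0 : Mdl t).1 = 0 := rfl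
@[simp] lemma zero_snd_fst : (0 : Mdl t).2.1 = 0 := rfl
@[simp] lemma zero_snd_snd : (0 : Mdl t).2.2 = 0 := rfl

lemma Mdl.mul_assoc : ∀ x y z : Mdl t, x * y * z = x * (y * z) := by
  intro x y z
  refine Prod.ext (by simp; ring) (Prod.ext ?_ ?_)
  · funext i; simp; ring
  · funext i; fin_cases i <;> simp [mV] <;> ring
lemma Mdl.mul_comm : ∀ x y : Mdl t, x * y = y * x := by
  intro x y
  refine Prod.ext (by simp; ring) (Prod.ext ?_ ?_)
  · funext i; simp; ring
  · funext i; fin_cases i <;> simp [mV] <;> ring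
lemma Mdl.one_mul : ∀ x : Mdl t, 1 * x = x := by
  intro x
  refine Prod.ext (by simp) (Prod.ext ?_ ?_)
  · funext i; simp
  · funext i; fin_cases i <;> simp [mV]
lemma Mdl.left_distrib : ∀ x y z : Mdl t, x * (y + z) = x * y + x * z := by
  intro x y z
  refine Prod.ext (by simp; ring) (Prod.ext ?_ ?_)
  · funext i; simp; ring
  · funext i; fin_cases i <;> simp [mV] <;> ring
lemma Mdl.zero_mul : ∀ x : Mdl t, 0 * x = 0 := by
  intro x
  refine Prod.ext (by simp) (Prod.ext ?_ ?_)
  · funext i; simp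
  · funext i; fin_cases i <;> simp [mV]

instance : CommRing (Mdl t) :=
  { (inferInstance : AddCommGroup (Mdl t)) with
    mul := (· * ·)
    one := 1
    mul_assoc := Mdl.mul_assoc
    mul_comm := Mdl.mul_comm
    one_mul := Mdl.one_mul
    mul_one := fun x => (Mdl.mul_comm x 1) ▸ Mdl.one_mul x
    left_distrib := Mdl.left_distrib
    right_distrib := fun x y z => by
      rw [Mdl.mul_comm (x+y) z, Mdl.left_distrib, Mdl.mul_comm z x, Mdl.mul_comm z y]
    zero_mul := Mdl.zero_mul
    mul_zero := fun x => (Mdl.mul_comm x 0) ▸ Mdl.zero_mul x }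

instance : Algebra ℚ (Mdl t) :=
  Algebra.ofModule
    (fun r x y => by
      refine Prod.ext (by simp; ring) (Prod.ext ?_ ?_)
      · funext i; simp; ring
      · funext i; fin_cases i <;> simp [mV] <;> ring)
    (fun r x y => by
      refine Prod.ext (by simp; ring) (Prod.ext ?_ ?_)
      · funext i; simp; ring
      · funext i; fin_cases i <;> simp [mV] <;> ring)

lemma algebraMap_def (r : ℚ) : algebraMap ℚ (Mdl t) r = ((r : ℚ), 0, 0) := by
  rw [Algebra.algebraMap_eq_smul_one]
  refine Prod.ext (by simp) (Prod.ext ?_ ?_)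
  · funext i; simp
  · funext i; simp

def Tmat (u : ℚ) : Matrix (Fin 4) (Fin 4) ℚ := !![(0:ℚ),0,0,0; 0,0,0,0; 1,1,0,0; u,1,0,0]

def vecM (t : ℚ) (v : Fin 4 → ℚ) : Mdl t := (0, v, 0)

def gen (t : ℚ) (i : Fin 4) : Mdl t := vecM t (Pi.single i 1)

lemma gen_mul_gen (i j : Fin 4) :
    (gen t i) * (gen t j) = ((0 : ℚ), (0 : Fin 4 → ℚ), mV t (Pi.single i 1) (Pi.single j 1)) := by
  refine Prod.ext ?_ (Prod.ext ?_ ?_) <;> simp only [mul_fst, mul_snd_fst, mul_snd_snd, add_fst', add_snd_fst, add_snd_snd, smul_fst', smul_snd_fst, smul_snd_snd] <;> simp [gen, vecM]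

lemma amap_gen_gen (r : ℚ) (i j : Fin 4) :
    algebraMap ℚ (Mdl t) r * gen t i * gen t j
      = ((0 : ℚ), (0 : Fin 4 → ℚ), r • mV t (Pi.single i 1) (Pi.single j 1)) := by
  refine Prod.ext (by simp only [mul_fst, mul_snd_fst, mul_snd_snd, add_fst', add_snd_fst, add_snd_snd, smul_fst', smul_snd_fst, smul_snd_snd]; simp [gen, vecM, algebraMap_def]) (Prod.ext ?_ ?_)
  · funext k; simp only [mul_fst, mul_snd_fst, mul_snd_snd, add_fst', add_snd_fst, add_snd_snd, smul_fst', smul_snd_fst, smul_snd_snd]; simp [gen, vecM, algebraMap_def]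
  · funext k
    simp only [mul_fst, mul_snd_fst, mul_snd_snd, add_fst', add_snd_fst, add_snd_snd, smul_fst', smul_snd_fst, smul_snd_snd]
    fin_cases k <;> simp [gen, vecM, mV, algebraMap_def] <;> ring

lemma aeval_gen_rel (i : Fin 4) :
    (aeval (gen t) : MvPolynomial (Fin 4) ℚ →ₐ[ℚ] Mdl t)
      (X i ^ 2 - ∑ j ∈ Finset.univ.filter (fun j => j < i), C ((Tmat t) i j) * X j * X i) = 0 := by
  rw [map_sub, map_pow, map_sum, aeval_X, sub_eq_zero, Finset.sum_filter, Fin.sum_univ_four]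
  have hC : ∀ (j : Fin 4) (r : ℚ), (aeval (gen t)) (C r * X j * X i)
      = r • (gen t j * gen t i) := by
    intro j r
    rw [map_mul, map_mul, aeval_C, aeval_X, aeval_X, Algebra.smul_def, mul_assoc]
  rw [sq, gen_mul_gen]
  fin_cases i <;>
    simp only [hC, Fin.isValue, Fin.lt_def, show ((0:Fin 4)).val = 0 from rfl,
      show ((1:Fin 4)).val = 1 from rfl, show ((2:Fin 4)).val = 2 from rfl,
      show ((3:Fin 4)).val = 3 from rfl] <;>
    norm_num <;>
    · refine Prod.ext (by simp only [mul_fst, mul_snd_fst, mul_snd_snd, add_fst', add_snd_fst, add_snd_snd, smul_fst', smul_snd_fst, smul_snd_snd]; simp [gen, vecM]) (Prod.ext ?_ ?_)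
      · funext k; simp only [mul_fst, mul_snd_fst, mul_snd_snd, add_fst', add_snd_fst, add_snd_snd, smul_fst', smul_snd_fst, smul_snd_snd]; simp [gen, vecM]
      · funext k
        simp only [mul_fst, mul_snd_fst, mul_snd_snd, add_fst', add_snd_fst, add_snd_snd, smul_fst', smul_snd_fst, smul_snd_snd]
        fin_cases k <;>
          simp [gen, vecM, Tmat, mV, Pi.single_apply, Matrix.cons_val_zero,
            Matrix.cons_val_one, Matrix.head_cons, Matrix.cons_val_two, Matrix.cons_val_three,
            Matrix.vecHead, Matrix.vecTail]

def phi (t : ℚ) : NTAlg ℚ (Tmat t) →ₐ[ℚ] Mdl t :=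
  Ideal.Quotient.liftₐ _ (aeval (gen t)) (by
    intro a ha
    have hle : Ideal.span (relSet ℚ (Tmat t)) ≤
        RingHom.ker (aeval (gen t) : MvPolynomial (Fin 4) ℚ →ₐ[ℚ] Mdl t).toRingHom := by
      rw [Ideal.span_le]
      rintro x ⟨i, rfl⟩
      simpa [RingHom.mem_ker] using aeval_gen_rel (t := t) i
    exact hle ha)

lemma phi_gen (i : Fin 4) : phi t (NTgen ℚ (Tmat t) i) = gen t i := by
  exact aeval_X (R := ℚ) (gen t) i

-- new material
lemma mV_smul_left (r : ℚ) (v w : Fin 4 → ℚ) : mV t (r • v) w = r • mV t v w := by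
  funext k; fin_cases k <;> simp [mV] <;> ring

lemma sum_smul_vec (c : Fin 4 → ℚ) (w : Fin 4 → Fin 4 → ℚ) :
    (∑ j, c j • vecM t (w j)) = vecM t (∑ j, c j • w j) := by
  rw [Fin.sum_univ_four, Fin.sum_univ_four]
  refine Prod.ext ?_ (Prod.ext ?_ ?_) <;>
    simp only [mul_fst, mul_snd_fst, mul_snd_snd, add_fst', add_snd_fst, add_snd_snd, smul_fst', smul_snd_fst, smul_snd_snd] <;> simp [vecM]

lemma sum_smul_gen (c : Fin 4 → ℚ) :
    (∑ j, c j • gen t j) = vecM t c := by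
  rw [show (∑ j, c j • gen t j) = ∑ j, c j • vecM t (Pi.single j 1) from rfl, sum_smul_vec]
  unfold vecM
  refine Prod.ext rfl (Prod.ext ?_ rfl)
  funext k
  rw [Fin.sum_univ_four]
  fin_cases k <;> simp [Pi.single_apply]

lemma vec_sq (v : Fin 4 → ℚ) :
    vecM t v * vecM t v = ((0:ℚ), (0 : Fin 4 → ℚ), mV t v v) := by
  refine Prod.ext (by simp only [mul_fst, mul_snd_fst, mul_snd_snd, add_fst', add_snd_fst, add_snd_snd, smul_fst', smul_snd_fst, smul_snd_snd]; simp [vecM]) (Prod.ext ?_ ?_)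
  · funext k; simp only [mul_fst, mul_snd_fst, mul_snd_snd, add_fst', add_snd_fst, add_snd_snd, smul_fst', smul_snd_fst, smul_snd_snd]; simp [vecM]
  · funext k; simp only [mul_fst, mul_snd_fst, mul_snd_snd, add_fst', add_snd_fst, add_snd_snd, smul_fst', smul_snd_fst, smul_snd_snd]; simp [vecM]

lemma amap_vec_vec (r : ℚ) (v w : Fin 4 → ℚ) :
    algebraMap ℚ (Mdl t) r * vecM t v * vecM t w
      = ((0:ℚ), (0 : Fin 4 → ℚ), r • mV t v w) := by
  refine Prod.ext (by simp only [mul_fst, mul_snd_fst, mul_snd_snd, add_fst', add_snd_fst, add_snd_snd, smul_fst', smul_snd_fst, smul_snd_snd]; simp [vecM, algebraMap_def]) (Prod.ext ?_ ?_)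
  · funext k; simp only [mul_fst, mul_snd_fst, mul_snd_snd, add_fst', add_snd_fst, add_snd_snd, smul_fst', smul_snd_fst, smul_snd_snd]; simp [vecM, algebraMap_def]
  · funext k
    simp only [mul_fst, mul_snd_fst, mul_snd_snd, add_fst', add_snd_fst, add_snd_snd, smul_fst', smul_snd_fst, smul_snd_snd]
    fin_cases k <;> simp [vecM, mV, algebraMap_def] <;> ring

lemma NTgen_sq (u : ℚ) (i : Fin 4) :
    (NTgen ℚ (Tmat u) i)^2 = ∑ j ∈ Finset.univ.filter (fun j => j < i),
      algebraMap ℚ (NTAlg ℚ (Tmat u)) ((Tmat u) i j) * NTgen ℚ (Tmat u) j * NTgen ℚ (Tmat u) i := by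
  have hmem : (X i ^ 2 - ∑ j ∈ Finset.univ.filter (fun j => j < i),
      C ((Tmat u) i j) * X j * X i) ∈ Ideal.span (relSet ℚ (Tmat u)) :=
    Ideal.subset_span ⟨i, rfl⟩
  have h0 := Ideal.Quotient.eq_zero_iff_mem.mpr hmem
  rw [map_sub, map_pow, map_sum, sub_eq_zero] at h0
  rw [NTgen, h0]
  refine Finset.sum_congr rfl fun j _ => ?_
  rw [map_mul, map_mul]
  rfl



lemma row_zero (q' a0 a1 a2 a3 : ℚ) (hq : q' ≠ 0)
    (h0 : a0*a1 + a1*a0 = 0)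
    (h1 : a0*a2 + a2*a0 + a2*a2 = 0)
    (h2 : a0*a3 + a3*a0 + q'*(a3*a3) = 0)
    (h3 : a1*a2 + a2*a1 + a2*a2 = 0)
    (h4 : a1*a3 + a3*a1 + a3*a3 = 0) :
    a2 = 0 ∧ a3 = 0 ∧ a0*a1 = 0 := by
  have ha3 : a3 = 0 := by
    by_contra h
    have e1 : a3 * (2*a0 + q'*a3) = 0 := by linear_combination h2
    have e2 : a3 * (2*a1 + a3) = 0 := by linear_combination h4
    have f1 : 2*a0 + q'*a3 = 0 := by
      rcases mul_eq_zero.mp e1 with h' | h'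
      · exact absurd h' h
      · exact h'
    have f2 : 2*a1 + a3 = 0 := by
      rcases mul_eq_zero.mp e2 with h' | h'
      · exact absurd h' h
      · exact h'
    have g1 : q' * (a3 * a3) = 0 := by linear_combination a3*f1 - 2*a0*f2 + 2*h0
    have g2 : a3 * a3 = 0 := by
      rcases mul_eq_zero.mp g1 with h' | h'
      · exact absurd h' hq
      · exact h'
    exact h (mul_self_eq_zero.mp g2)
  have ha2 : a2 = 0 := by
    by_contra h
    have e1 : a2 * (2*a0 + a2) = 0 := by linear_combination h1
    have e2 : a2 * (2*a1 + a2) = 0 := by linear_combination h3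
    have f1 : 2*a0 + a2 = 0 := by
      rcases mul_eq_zero.mp e1 with h' | h'
      · exact absurd h' h
      · exact h'
    have f2 : 2*a1 + a2 = 0 := by
      rcases mul_eq_zero.mp e2 with h' | h'
      · exact absurd h' h
      · exact h'
    have g2 : a2 * a2 = 0 := by linear_combination a2*f1 - 2*a0*f2 + 2*h0
    exact h (mul_self_eq_zero.mp g2)
  refine ⟨ha2, ha3, by linarith [h0]⟩

lemma key_arith (p' q' a0 a1 b0 b1 c0 c1 c2 c3 d0 d1 d2 d3 : ℚ)
    (hq : q' ≠ 0)
    (ha : a0*a1 = 0) (hb : b0*b1 = 0)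
    (hdet1 : a0*b1 - a1*b0 ≠ 0) (hdet2 : c2*d3 - c3*d2 ≠ 0)
    (hc0 : 2*(c0*c1) = (a0+b0)*c1 + (a1+b1)*c0)
    (hc1 : 2*(c0*c2) + c2*c2 = (a0+b0)*c2)
    (hc2 : 2*(c0*c3) + q'*(c3*c3) = (a0+b0)*c3)
    (hc3 : 2*(c1*c2) + c2*c2 = (a1+b1)*c2)
    (hc4 : 2*(c1*c3) + c3*c3 = (a1+b1)*c3)
    (hc5 : c2*c3 = 0)
    (hd0 : 2*(d0*d1) = (p'*a0+b0)*d1 + (p'*a1+b1)*d0)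
    (hd1 : 2*(d0*d2) + d2*d2 = (p'*a0+b0)*d2)
    (hd2 : 2*(d0*d3) + q'*(d3*d3) = (p'*a0+b0)*d3)
    (hd3 : 2*(d1*d2) + d2*d2 = (p'*a1+b1)*d2)
    (hd4 : 2*(d1*d3) + d3*d3 = (p'*a1+b1)*d3)
    (hd5 : d2*d3 = 0) :
    ∃ r : ℚ, r ^ 2 = p' * q' := by
  have hss : ((a0+b0)*(a1+b1)) * ((a0+b0)*(a1+b1)) = (a0*b1 - a1*b0) * (a0*b1 - a1*b0) := by
    linear_combination (a0*a1 + b0*b1 + 2*(a0*b1+a1*b0) + 4*b0*b1)*ha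
      + (a0*a1 + b0*b1 + 2*(a0*b1+a1*b0))*hb
  have hssne : (a0+b0)*(a1+b1) ≠ 0 := by
    intro h
    apply hdet1
    have : (a0*b1 - a1*b0) * (a0*b1 - a1*b0) = 0 := by rw [← hss, h]; ring
    exact mul_self_eq_zero.mp this
  have huu : (p'*a0+b0)*(p'*a1+b1) = p'*((a0+b0)*(a1+b1)) := by
    linear_combination (p'*p' - p')*ha + (1-p')*hb
  rcases eq_or_ne c2 0 with hc2z | hc2nz
  · -- c2 = 0, so c3 ≠ 0, d2 ≠ 0, d3 = 0
    have hc3nz : c3 ≠ 0 := by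
      intro h; exact hdet2 (by rw [hc2z, h]; ring)
    have hd2nz : d2 ≠ 0 := by
      intro h; exact hdet2 (by rw [hc2z, h]; ring)
    have hd3z : d3 = 0 := by
      rcases mul_eq_zero.mp hd5 with h' | h'
      · exact absurd h' hd2nz
      · exact h'
    have hE1 : 2*c0 + q'*c3 = (a0+b0) := by
      have h' : c3 * (2*c0 + q'*c3 - (a0+b0)) = 0 := by linear_combination hc2
      rcases mul_eq_zero.mp h' with h'' | h''
      · exact absurd h'' hc3nz
      · linarith
    have hE2 : 2*c1 + c3 = (a1+b1) := by
      have h' : c3 * (2*c1 + c3 - (a1+b1)) = 0 := by linear_combination hc4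
      rcases mul_eq_zero.mp h' with h'' | h''
      · exact absurd h'' hc3nz
      · linarith
    have hcsq : q'*(c3*c3) = (a0+b0)*(a1+b1) := by
      linear_combination ((a1+b1) - 2*c1)*hE1 + (q'*c3)*hE2 + 2*hc0
    have hF1 : 2*d0 + d2 = (p'*a0+b0) := by
      have h' : d2 * (2*d0 + d2 - (p'*a0+b0)) = 0 := by linear_combination hd1
      rcases mul_eq_zero.mp h' with h'' | h''
      · exact absurd h'' hd2nz
      · linarith
    have hF2 : 2*d1 + d2 = (p'*a1+b1) := by
      have h' : d2 * (2*d1 + d2 - (p'*a1+b1)) = 0 := by linear_combination hd3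
      rcases mul_eq_zero.mp h' with h'' | h''
      · exact absurd h'' hd2nz
      · linarith
    have hdsq : d2*d2 = (p'*a0+b0)*(p'*a1+b1) := by
      linear_combination ((p'*a1+b1) - 2*d1)*hF1 + d2*hF2 + 2*hd0
    refine ⟨d2/c3, ?_⟩
    field_simp
    linear_combination hdsq + huu - p'*hcsq
  · -- c2 ≠ 0, so c3 = 0, d3 ≠ 0, d2 = 0
    have hc3z : c3 = 0 := by
      rcases mul_eq_zero.mp hc5 with h' | h'
      · exact absurd h' hc2nz
      · exact h'
    have hd3nz : d3 ≠ 0 := by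
      intro h; exact hdet2 (by rw [hc3z, h]; ring)
    have hd2z : d2 = 0 := by
      rcases mul_eq_zero.mp hd5 with h' | h'
      · exact h'
      · exact absurd h' hd3nz
    have hE1 : 2*c0 + c2 = (a0+b0) := by
      have h' : c2 * (2*c0 + c2 - (a0+b0)) = 0 := by linear_combination hc1
      rcases mul_eq_zero.mp h' with h'' | h''
      · exact absurd h'' hc2nz
      · linarith
    have hE2 : 2*c1 + c2 = (a1+b1) := by
      have h' : c2 * (2*c1 + c2 - (a1+b1)) = 0 := by linear_combination hc3
      rcases mul_eq_zero.mp h' with h'' | h''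
      · exact absurd h'' hc2nz
      · linarith
    have hcsq : c2*c2 = (a0+b0)*(a1+b1) := by
      linear_combination ((a1+b1) - 2*c1)*hE1 + c2*hE2 + 2*hc0
    have hF1 : 2*d0 + q'*d3 = (p'*a0+b0) := by
      have h' : d3 * (2*d0 + q'*d3 - (p'*a0+b0)) = 0 := by linear_combination hd2
      rcases mul_eq_zero.mp h' with h'' | h''
      · exact absurd h'' hd3nz
      · linarith
    have hF2 : 2*d1 + d3 = (p'*a1+b1) := by
      have h' : d3 * (2*d1 + d3 - (p'*a1+b1)) = 0 := by linear_combination hd4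
      rcases mul_eq_zero.mp h' with h'' | h''
      · exact absurd h'' hd3nz
      · linarith
    have hdsq : q'*(d3*d3) = (p'*a0+b0)*(p'*a1+b1) := by
      linear_combination ((p'*a1+b1) - 2*d1)*hF1 + (q'*d3)*hF2 + 2*hd0
    refine ⟨q'*d3/c2, ?_⟩
    field_simp
    linear_combination hdsq + huu - p'*hcsq




lemma det_fin_four' (M : Matrix (Fin 4) (Fin 4) ℚ) :
    M.det =
      M 0 0 * M 1 1 * M 2 2 * M 3 3 - M 0 0 * M 1 1 * M 2 3 * M 3 2 - M 0 0 * M 1 2 * M 2 1 * M 3 3 +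
      M 0 0 * M 1 2 * M 2 3 * M 3 1 + M 0 0 * M 1 3 * M 2 1 * M 3 2 - M 0 0 * M 1 3 * M 2 2 * M 3 1 -
      M 0 1 * M 1 0 * M 2 2 * M 3 3 + M 0 1 * M 1 0 * M 2 3 * M 3 2 + M 0 1 * M 1 2 * M 2 0 * M 3 3 -
      M 0 1 * M 1 2 * M 2 3 * M 3 0 - M 0 1 * M 1 3 * M 2 0 * M 3 2 + M 0 1 * M 1 3 * M 2 2 * M 3 0 +
      M 0 2 * M 1 0 * M 2 1 * M 3 3 - M 0 2 * M 1 0 * M 2 3 * M 3 1 - M 0 2 * M 1 1 * M 2 0 * M 3 3 +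
      M 0 2 * M 1 1 * M 2 3 * M 3 0 + M 0 2 * M 1 3 * M 2 0 * M 3 1 - M 0 2 * M 1 3 * M 2 1 * M 3 0 -
      M 0 3 * M 1 0 * M 2 1 * M 3 2 + M 0 3 * M 1 0 * M 2 2 * M 3 1 + M 0 3 * M 1 1 * M 2 0 * M 3 2 -
      M 0 3 * M 1 1 * M 2 2 * M 3 0 - M 0 3 * M 1 2 * M 2 0 * M 3 1 + M 0 3 * M 1 2 * M 2 1 * M 3 0 := by
  rw [Matrix.det_succ_row_zero, Fin.sum_univ_four]
  norm_num [Matrix.det_fin_three, Matrix.submatrix_apply, Fin.succAbove, Fin.lt_def,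
    show (Fin.succ 2 : Fin 4) = 3 from rfl, show ((3:Fin 4):ℕ) = 3 from rfl,
    show (Fin.castSucc 2 : Fin 4) = 2 from rfl]
  ring

def pr3 (t : ℚ) (m : Fin 6) : Mdl t →ₗ[ℚ] ℚ where
  toFun z := z.2.2 m
  map_add' := fun _ _ => rfl
  map_smul' := fun _ _ => rfl

lemma pr3_apply (m : Fin 6) (z : Mdl t) : pr3 t m z = z.2.2 m := rfl

def pr2 (t : ℚ) (k : Fin 4) : Mdl t →ₗ[ℚ] ℚ where
  toFun z := z.2.1 k
  map_add' := fun _ _ => rfl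
  map_smul' := fun _ _ => rfl

lemma pr2_apply (k : Fin 4) (z : Mdl t) : pr2 t k z = z.2.1 k := rfl

lemma exists_sqrt (p' q' : ℚ) (hq : q' ≠ 0) (h : NTIso ℚ (Tmat p') (Tmat q')) :
    ∃ r : ℚ, r ^ 2 = p' * q' := by
  obtain ⟨e, h1, h2⟩ := h
  choose Γ hΓ using fun i => (Submodule.mem_span_range_iff_exists_fun ℚ).mp (h1 i)
  choose Δ hΔ using fun i => (Submodule.mem_span_range_iff_exists_fun ℚ).mp (h2 i)
  have himg : ∀ i, phi q' (e (NTgen ℚ (Tmat p') i)) = vecM q' (Γ i) := by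
    intro i
    rw [← hΓ i, map_sum]
    simp only [map_smul, phi_gen]
    rw [show (∑ j, Γ i j • gen q' j) = vecM q' (Γ i) from sum_smul_gen (Γ i)]
  -- (A) : Γ · Δ = 1
  have hA : ∀ i k : Fin 4, (∑ j, Γ i j * Δ j k) = if k = i then (1:ℚ) else 0 := by
    intro i k
    have hx : (NTgen ℚ (Tmat p') i) = ∑ j, Γ i j • ∑ l, Δ j l • NTgen ℚ (Tmat p') l := by
      conv_lhs => rw [← e.symm_apply_apply (NTgen ℚ (Tmat p') i)]
      rw [← hΓ i, map_sum]
      refine Finset.sum_congr rfl fun j _ => ?_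
      rw [map_smul, hΔ j]
    have hpx := congrArg (phi p') hx
    rw [phi_gen, map_sum] at hpx
    have hterm : ∀ j, phi p' (Γ i j • ∑ l, Δ j l • NTgen ℚ (Tmat p') l)
        = Γ i j • vecM p' (Δ j) := by
      intro j
      rw [map_smul, map_sum]
      simp only [map_smul, phi_gen]
      rw [show (∑ l, Δ j l • gen p' l) = vecM p' (Δ j) from sum_smul_gen (Δ j)]
    rw [Finset.sum_congr rfl (fun j _ => hterm j),
      show (∑ j, Γ i j • vecM p' (Δ j)) = vecM p' (∑ j, Γ i j • Δ j) from sum_smul_vec _ _] at hpx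
    have hc := congrArg (pr2 p' k) hpx
    rw [pr2_apply, pr2_apply] at hc
    simp only [gen, vecM, Pi.single_apply] at hc
    rw [hc, Finset.sum_apply]
    exact Finset.sum_congr rfl fun j _ => by simp
  -- (B) : relations
  have hB : ∀ (i : Fin 4) (m : Fin 6), mV q' (Γ i) (Γ i) m
      = ∑ j ∈ Finset.univ.filter (fun j => j < i), Tmat p' i j * mV q' (Γ j) (Γ i) m := by
    intro i m
    have h0 : (phi q' (e ((NTgen ℚ (Tmat p') i)))) ^ 2
        = ∑ j ∈ Finset.univ.filter (fun j => j < i),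
            algebraMap ℚ (Mdl q') (Tmat p' i j) * phi q' (e (NTgen ℚ (Tmat p') j))
              * phi q' (e (NTgen ℚ (Tmat p') i)) := by
      rw [← map_pow, ← map_pow, NTgen_sq, map_sum, map_sum]
      refine Finset.sum_congr rfl fun j _ => ?_
      rw [map_mul, map_mul, map_mul, map_mul, AlgEquiv.commutes, AlgHom.commutes]
    simp only [himg] at h0
    rw [pow_two, vec_sq] at h0
    have hc := congrArg (pr3 q' m) h0
    rw [map_sum] at hc
    simp only [amap_vec_vec] at hc
    simp only [pr3, LinearMap.coe_mk, AddHom.coe_mk, Pi.smul_apply, smul_eq_mul] at hc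
    exact hc
  -- Γ is invertible
  have hGD : (Matrix.of Γ) * (Matrix.of Δ) = 1 := by
    ext i k
    rw [Matrix.mul_apply, Matrix.one_apply]
    simp only [Matrix.of_apply]
    rw [hA i k]
    by_cases hik : i = k <;> simp [hik, eq_comm]
  have hdet : (Matrix.of Γ).det ≠ 0 := by
    intro hz
    have hd := congrArg Matrix.det hGD
    rw [Matrix.det_mul, hz, Matrix.det_one] at hd
    simp at hd
  -- filters
  have hf0 : Finset.univ.filter (fun j : Fin 4 => j < 0) = ∅ := by decide
  have hf1 : Finset.univ.filter (fun j : Fin 4 => j < 1) = {0} := by decide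
  have hf2 : Finset.univ.filter (fun j : Fin 4 => j < 2) = {0, 1} := by decide
  have hf3 : Finset.univ.filter (fun j : Fin 4 => j < 3) = {0, 1, 2} := by decide
  -- row 0 and row 1 structure
  have hrow0 := fun m => (hB 0 m).trans (by rw [hf0])
  have hrow1 := fun m => (hB 1 m).trans (by
    rw [hf1, Finset.sum_singleton, show Tmat p' 1 0 = 0 from rfl])
  have ha' := row_zero q' (Γ 0 0) (Γ 0 1) (Γ 0 2) (Γ 0 3) hq
    (by have := hrow0 0; simpa [mV] using this)
    (by have := hrow0 1; simpa [mV] using this)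
    (by have := hrow0 2; simpa [mV] using this)
    (by have := hrow0 3; simpa [mV] using this)
    (by have := hrow0 4; simpa [mV] using this)
  have hb' := row_zero q' (Γ 1 0) (Γ 1 1) (Γ 1 2) (Γ 1 3) hq
    (by have := hrow1 0; simpa [mV] using this)
    (by have := hrow1 1; simpa [mV] using this)
    (by have := hrow1 2; simpa [mV] using this)
    (by have := hrow1 3; simpa [mV] using this)
    (by have := hrow1 4; simpa [mV] using this)
  obtain ⟨ha2, ha3, ha01⟩ := ha'
  obtain ⟨hb2, hb3, hb01⟩ := hb'
  -- det factorization
  have hfac : (Matrix.of Γ).det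
      = (Γ 0 0 * Γ 1 1 - Γ 0 1 * Γ 1 0) * (Γ 2 2 * Γ 3 3 - Γ 2 3 * Γ 3 2) := by
    rw [det_fin_four']
    simp only [Matrix.of_apply]
    rw [ha2, ha3, hb2, hb3]
    ring
  have hd12 := mul_ne_zero_iff.mp (by rwa [hfac] at hdet)
  -- rows 2 and 3 equations
  have hrow2 := fun m => (hB 2 m).trans (by
    rw [hf2, Finset.sum_insert (by decide), Finset.sum_singleton,
      show Tmat p' 2 0 = 1 from rfl, show Tmat p' 2 1 = 1 from rfl])
  have hrow3 := fun m => (hB 3 m).trans (by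
    rw [hf3, Finset.sum_insert (by decide), Finset.sum_insert (by decide),
      Finset.sum_singleton, show Tmat p' 3 0 = p' from rfl, show Tmat p' 3 1 = 1 from rfl,
      show Tmat p' 3 2 = 0 from rfl])
  have h20 := hrow2 0; have h21 := hrow2 1; have h22 := hrow2 2
  have h23 := hrow2 3; have h24 := hrow2 4; have h25 := hrow2 5
  have h30 := hrow3 0; have h31 := hrow3 1; have h32 := hrow3 2
  have h33 := hrow3 3; have h34 := hrow3 4; have h35 := hrow3 5
  simp only [mV] at h20 h21 h22 h23 h24 h25 h30 h31 h32 h33 h34 h35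
  simp only [ha2, ha3, hb2, hb3] at h21 h22 h23 h24 h25 h31 h32 h33 h34 h35
  exact key_arith p' q' (Γ 0 0) (Γ 0 1) (Γ 1 0) (Γ 1 1) (Γ 2 0) (Γ 2 1) (Γ 2 2) (Γ 2 3)
    (Γ 3 0) (Γ 3 1) (Γ 3 2) (Γ 3 3) hq ha01 hb01 hd12.1 hd12.2
    (by linear_combination h20) (by linear_combination h21) (by linear_combination h22)
    (by linear_combination h23) (by linear_combination h24) (by linear_combination h25 / 2)
    (by linear_combination h30) (by linear_combination h31) (by linear_combination h32)
    (by linear_combination h33) (by linear_combination h34) (by linear_combination h35 / 2)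

lemma not_square_pq (p q : ℕ) (hp : p.Prime) (hq : q.Prime) (hne : p ≠ q)
    (r : ℚ) : r ^ 2 ≠ (p : ℚ) * q := by
  intro hr
  have hsq : IsSquare ((p * q : ℕ) : ℚ) := ⟨r, by push_cast; rw [← hr]; ring⟩
  have hsqn : IsSquare (p * q) := Rat.isSquare_natCast_iff.mp hsq
  have hsf : Squarefree (p * q) :=
    (Nat.squarefree_mul ((Nat.coprime_primes hp hq).mpr hne)).mpr ⟨hp.squarefree, hq.squarefree⟩
  obtain ⟨k, hk⟩ := hsqn
  have hk1 : IsUnit k := hsf k (by rw [← hk])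
  have h1 : p * q = 1 := by rw [hk, Nat.isUnit_iff.mp hk1]
  have h4 : 2*2 ≤ p*q := Nat.mul_le_mul hp.two_le hq.two_le
  omega

lemma main_part1 (p q : ℕ) (hp : p.Prime) (hq : q.Prime) (hne : p ≠ q) :
    ¬ NTIso ℚ (Tmat (p:ℚ)) (Tmat (q:ℚ)) := by
  intro h
  have hq0 : (q : ℚ) ≠ 0 := by
    exact_mod_cast hq.ne_zero
  obtain ⟨r, hr⟩ := exists_sqrt (p:ℚ) (q:ℚ) hq0 h
  exact not_square_pq p q hp hq hne r hr

lemma tmat_sltm (u : ℚ) : ∀ i j : Fin 4, i ≤ j → Tmat u i j = 0 := by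
  intro i j hij
  fin_cases i <;> fin_cases j <;> simp_all [Tmat] <;> rfl

end Stmt3Aux

/-- Over `ℚ`, the matrices `T_p` for distinct primes `p` give pairwise
non-isomorphic graded algebras; in particular there are infinitely many
isomorphism classes of the algebras `A(T)` for `T` a `4×4` SLTM over `ℚ`. -/
theorem stmt3 :
    (∀ p q : ℕ, p.Prime → q.Prime → p ≠ q →
      ¬ NTIso ℚ
          !![(0:ℚ),0,0,0; 0,0,0,0; 1,1,0,0; (p:ℚ),1,0,0]
          !![(0:ℚ),0,0,0; 0,0,0,0; 1,1,0,0; (q:ℚ),1,0,0]) ∧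
    (∀ N : ℕ, ∃ f : Fin N → Matrix (Fin 4) (Fin 4) ℚ,
      (∀ x, SLTM ℚ (f x)) ∧ ∀ x y, x ≠ y → ¬ NTIso ℚ (f x) (f y)) := by
  constructor
  · intro p q hp hq hne h
    exact Stmt3Aux.main_part1 p q hp hq hne h
  · intro N
    refine ⟨fun x => Stmt3Aux.Tmat ((Nat.nth Nat.Prime x : ℕ) : ℚ), fun x => ?_, fun x y hxy => ?_⟩
    · intro i j hij
      exact Stmt3Aux.tmat_sltm _ i j hij
    · exact Stmt3Aux.main_part1 _ _ (Nat.prime_nth_prime x) (Nat.prime_nth_prime y)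
        (fun hc => hxy (Fin.val_injective (Nat.nth_injective Nat.infinite_setOf_prime hc)))
end
end

section
/- Let F be an algebraically closed field of characteristic ≠ 2. Let T be the 4×4 strictly lower triangular matrix with rows (0,0,0,0), (0,0,0,0), (1,1,0,0), (1,1,0,0), and let S be the 4×4 strictly lower triangular matrix with rows (0,0,0,0), (0,0,0,0), (a,b,0,0), (c,d,0,0) where a, b, c, d ∈ F are all nonzero. Then the graded algebras A(T) and A(S) are isomorphic. -/
open MvPolynomial

set_option synthInstance.maxHeartbeats 1000000
set_option maxHeartbeats 4000000

noncomputable section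

variable (F : Type) [Field F]

variable {F} in
theorem NTrel' {n : ℕ} (T : Matrix (Fin n) (Fin n) F) (i : Fin n) :
    NTgen F T i ^ 2 = ∑ j ∈ Finset.univ.filter (fun j => j < i),
      algebraMap F (NTAlg F T) (T i j) * NTgen F T j * NTgen F T i := by
  have h : Ideal.Quotient.mk (Ideal.span (relSet F T))
      (X i ^ 2 - ∑ j ∈ Finset.univ.filter (fun j => j < i), C (T i j) * X j * X i) = 0 :=
    Ideal.Quotient.eq_zero_iff_mem.mpr (Ideal.subset_span ⟨i, rfl⟩)
  rw [map_sub, sub_eq_zero, map_pow, map_sum] at h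
  have hC : ∀ r : F, Ideal.Quotient.mk (Ideal.span (relSet F T)) (C r)
      = algebraMap F (NTAlg F T) r := fun r => rfl
  simpa [NTgen, map_mul, hC] using h

variable {F} in
def NTlift {n : ℕ} (T : Matrix (Fin n) (Fin n) F) {A : Type} [CommRing A] [Algebra F A]
    (g : Fin n → A)
    (hg : ∀ i : Fin n, g i ^ 2 =
      ∑ j ∈ Finset.univ.filter (fun j => j < i), algebraMap F A (T i j) * g j * g i) :
    NTAlg F T →ₐ[F] A :=
  Ideal.Quotient.liftₐ _ (aeval g) (by
    intro p hp
    rw [← RingHom.mem_ker]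
    refine Ideal.span_le.mpr ?_ hp
    rintro q ⟨i, rfl⟩
    simp only [SetLike.mem_coe, RingHom.mem_ker, RingHom.coe_coe, map_sub, map_pow, map_sum,
      map_mul, aeval_X, aeval_C, sub_eq_zero]
    exact hg i)

variable {F} in
theorem NTlift_gen {n : ℕ} (T : Matrix (Fin n) (Fin n) F) {A : Type} [CommRing A] [Algebra F A]
    (g : Fin n → A) (hg) (i : Fin n) : NTlift T g hg (NTgen F T i) = g i := by
  show Ideal.Quotient.liftₐ _ _ _ _ = _
  rw [Ideal.Quotient.liftₐ_apply, NTgen]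
  exact aeval_X g i

/-- Over an algebraically closed field of characteristic `≠ 2`, the standard
matrix with third and fourth rows `(1,1,0,0)` is isomorphic to any matrix with
rows `(a,b,0,0)`, `(c,d,0,0)` with `a,b,c,d` nonzero. -/
theorem stmt5 [IsAlgClosed F] (h2 : (2 : F) ≠ 0) (a b c d : F)
    (ha : a ≠ 0) (hb : b ≠ 0) (hc : c ≠ 0) (hd : d ≠ 0) :
    NTIso F
      !![(0:F),0,0,0; 0,0,0,0; 1,1,0,0; 1,1,0,0]
      !![(0:F),0,0,0; 0,0,0,0; a,b,0,0; c,d,0,0] := by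
  obtain ⟨u, hu⟩ : ∃ u : F, u ^ 2 = a * b := IsAlgClosed.exists_pow_nat_eq _ two_pos
  obtain ⟨v, hv⟩ : ∃ v : F, v ^ 2 = c * d := IsAlgClosed.exists_pow_nat_eq _ two_pos
  have hu0 : u ≠ 0 := by
    intro h; rw [h] at hu; exact (mul_ne_zero ha hb) (by simpa using hu.symm)
  have hv0 : v ≠ 0 := by
    intro h; rw [h] at hv; exact (mul_ne_zero hc hd) (by simpa using hv.symm)
  have h4 : (4 : F) ≠ 0 := by
    have : (4 : F) = 2 * 2 := by norm_num
    rw [this]; exact mul_ne_zero h2 h2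
  set t : F := u⁻¹ with ht
  set s : F := v⁻¹ with hs
  set k : F := (4 : F)⁻¹ with hk
  have htu : t * u = 1 := inv_mul_cancel₀ hu0
  have hsv : s * v = 1 := inv_mul_cancel₀ hv0
  have hk4 : 4 * k = 1 := mul_inv_cancel₀ h4
  have habt : a * b * t ^ 2 = 1 := by
    rw [← hu, ht]; field_simp
  have hcds : c * d * s ^ 2 = 1 := by
    rw [← hv, hs]; field_simp
  set T : Matrix (Fin 4) (Fin 4) F := !![(0:F),0,0,0; 0,0,0,0; 1,1,0,0; 1,1,0,0] with hT
  set S : Matrix (Fin 4) (Fin 4) F := !![(0:F),0,0,0; 0,0,0,0; a,b,0,0; c,d,0,0] with hS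
  -- generators and structure constants
  set y : Fin 4 → NTAlg F S := NTgen F S with hy
  set x : Fin 4 → NTAlg F T := NTgen F T with hx
  set P : F →+* NTAlg F S := algebraMap F (NTAlg F S) with hP
  set Q : F →+* NTAlg F T := algebraMap F (NTAlg F T) with hQ
  -- the relations in A(S)
  have e0 := NTrel' S 0
  have e1 := NTrel' S 1
  have e2 := NTrel' S 2
  have e3 := NTrel' S 3
  have f0 := NTrel' T 0
  have f1 := NTrel' T 1
  have f2 := NTrel' T 2
  have f3 := NTrel' T 3
  simp (config := { decide := true }) only [Finset.sum_filter, Fin.sum_univ_four, hS, hT,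
    Matrix.cons_val', Matrix.cons_val_zero, Matrix.cons_val_one, Matrix.head_cons,
    Matrix.empty_val', Matrix.cons_val_fin_one, Matrix.head_fin_const, Matrix.cons_val_two,
    Matrix.tail_cons, Matrix.cons_val_three, Matrix.of_apply, ← hy, ← hx, ← hP, ← hQ,
    if_true, if_false, map_zero, zero_mul, add_zero, zero_add, map_one, one_mul]
      at e0 e1 e2 e3 f0 f1 f2 f3
  -- mapped identities
  have hPab : P a * P b * P t ^ 2 = 1 := by
    rw [← map_pow, ← map_mul, ← map_mul, habt, map_one]
  have hPcd : P c * P d * P s ^ 2 = 1 := by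
    rw [← map_pow, ← map_mul, ← map_mul, hcds, map_one]
  have hQtu : Q t * Q u = 1 := by rw [← map_mul, htu, map_one]
  have hQsv : Q s * Q v = 1 := by rw [← map_mul, hsv, map_one]
  have hQk : 4 * Q k = 1 := by
    have : ((4 : F) : F) = (4 : F) := rfl
    rw [show (4 : NTAlg F T) = Q 4 by rw [map_ofNat], ← map_mul, hk4, map_one]
  have hPk : 4 * P k = 1 := by
    rw [show (4 : NTAlg F S) = P 4 by rw [map_ofNat], ← map_mul, hk4, map_one]
  have hQu : Q u ^ 2 = Q a * Q b := by rw [← map_pow, ← map_mul, hu]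
  have hQv : Q v ^ 2 = Q c * Q d := by rw [← map_pow, ← map_mul, hv]
  have hPtu : P t * P u = 1 := by rw [← map_mul, htu, map_one]
  have hPsv : P s * P v = 1 := by rw [← map_mul, hsv, map_one]
  -- the forward generators
  set G : Fin 4 → NTAlg F S :=
    ![2 * y 0, 2 * y 1,
      (1 - P a * P t) * y 0 + (1 - P b * P t) * y 1 + 2 * P t * y 2,
      (1 - P c * P s) * y 0 + (1 - P d * P s) * y 1 + 2 * P s * y 3] with hG
  -- the backward generators
  set H : Fin 4 → NTAlg F T :=
    ![2 * Q k * x 0, 2 * Q k * x 1,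
      Q k * (Q a - Q u) * x 0 + Q k * (Q b - Q u) * x 1 + 2 * Q k * Q u * x 2,
      Q k * (Q c - Q v) * x 0 + Q k * (Q d - Q v) * x 1 + 2 * Q k * Q v * x 3] with hH
  have hGrel : ∀ i : Fin 4, G i ^ 2 =
      ∑ j ∈ Finset.univ.filter (fun j => j < i), algebraMap F (NTAlg F S) (T i j) * G j * G i := by
    intro i
    fin_cases i <;>
      simp (config := { decide := true }) only [Finset.sum_filter, Fin.sum_univ_four, hT,
        Matrix.cons_val', Matrix.cons_val_zero, Matrix.cons_val_one, Matrix.head_cons,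
        Matrix.empty_val', Matrix.cons_val_fin_one, Matrix.head_fin_const, Matrix.cons_val_two,
        Matrix.tail_cons, Matrix.cons_val_three, Matrix.of_apply, hG, ← hP, Fin.zero_eta, Fin.mk_one, Fin.reduceFinMk,
        if_true, if_false, map_zero, zero_mul, add_zero, zero_add, map_one, one_mul]
    · linear_combination (4 : NTAlg F S) * e0
    · linear_combination (4 : NTAlg F S) * e1
    · linear_combination ((1 - P a * P t) ^ 2 - 2 * (1 - P a * P t)) * e0 + ((1 - P b * P t) ^ 2 - 2 * (1 - P b * P t)) * e1
        + (2 * P t) ^ 2 * e2 + (2 * y 0 * y 1) * hPab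
    · linear_combination ((1 - P c * P s) ^ 2 - 2 * (1 - P c * P s)) * e0 + ((1 - P d * P s) ^ 2 - 2 * (1 - P d * P s)) * e1
        + (2 * P s) ^ 2 * e3 + (2 * y 0 * y 1) * hPcd
  have hHrel : ∀ i : Fin 4, H i ^ 2 =
      ∑ j ∈ Finset.univ.filter (fun j => j < i), algebraMap F (NTAlg F T) (S i j) * H j * H i := by
    intro i
    fin_cases i <;>
      simp (config := { decide := true }) only [Finset.sum_filter, Fin.sum_univ_four, hS,
        Matrix.cons_val', Matrix.cons_val_zero, Matrix.cons_val_one, Matrix.head_cons,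
        Matrix.empty_val', Matrix.cons_val_fin_one, Matrix.head_fin_const, Matrix.cons_val_two,
        Matrix.tail_cons, Matrix.cons_val_three, Matrix.of_apply, hH, ← hQ, Fin.zero_eta, Fin.mk_one, Fin.reduceFinMk,
        if_true, if_false, map_zero, zero_mul, add_zero, zero_add, map_one, one_mul]
    · linear_combination (4 * Q k ^ 2) * f0
    · linear_combination (4 * Q k ^ 2) * f1
    · linear_combination (Q k ^ 2 * (Q a - Q u) ^ 2 - 2 * Q k ^ 2 * Q a * (Q a - Q u)) * f0
        + (Q k ^ 2 * (Q b - Q u) ^ 2 - 2 * Q k ^ 2 * Q b * (Q b - Q u)) * f1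
        + 4 * Q u ^ 2 * Q k ^ 2 * f2 + 2 * Q k ^ 2 * x 0 * x 1 * hQu
    · linear_combination (Q k ^ 2 * (Q c - Q v) ^ 2 - 2 * Q k ^ 2 * Q c * (Q c - Q v)) * f0
        + (Q k ^ 2 * (Q d - Q v) ^ 2 - 2 * Q k ^ 2 * Q d * (Q d - Q v)) * f1
        + 4 * Q v ^ 2 * Q k ^ 2 * f3 + 2 * Q k ^ 2 * x 0 * x 1 * hQv
  set Φ : NTAlg F T →ₐ[F] NTAlg F S := NTlift T G hGrel with hΦ
  set Ψ : NTAlg F S →ₐ[F] NTAlg F T := NTlift S H hHrel with hΨ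
  have hΨG : ∀ i : Fin 4, Ψ (G i) = x i := by
    intro i
    fin_cases i <;>
      simp only [hG, Matrix.cons_val', Matrix.cons_val_zero, Matrix.cons_val_one,
        Matrix.head_cons, Matrix.empty_val', Matrix.cons_val_fin_one, Matrix.head_fin_const,
        Matrix.cons_val_two, Matrix.tail_cons, Matrix.cons_val_three,
        map_add, map_mul, map_sub, map_one, map_ofNat, hΨ, hy, hP, NTlift_gen, ← hx, ← hH,
        AlgHom.commutes, ← hQ, Fin.zero_eta, Fin.mk_one, Fin.reduceFinMk]
    · -- 2 * H 0 = x 0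
      simp only [hH, Matrix.cons_val_zero]
      linear_combination x 0 * hQk
    · simp only [hH, Matrix.cons_val_one, Matrix.head_cons, Matrix.cons_val_zero]
      linear_combination x 1 * hQk
    · simp only [hH, Matrix.cons_val_two, Matrix.tail_cons, Matrix.head_cons,
        Matrix.cons_val_zero, Matrix.cons_val_one]
      linear_combination (4 * Q k * x 2 - 2 * Q k * x 0 - 2 * Q k * x 1) * hQtu + x 2 * hQk
    · simp only [hH, Matrix.cons_val_three, Matrix.tail_cons, Matrix.head_cons,
        Matrix.cons_val_zero, Matrix.cons_val_one]
      linear_combination (4 * Q k * x 3 - 2 * Q k * x 0 - 2 * Q k * x 1) * hQsv + x 3 * hQk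
  have hΦH : ∀ i : Fin 4, Φ (H i) = y i := by
    intro i
    fin_cases i <;>
      simp only [hH, Matrix.cons_val', Matrix.cons_val_zero, Matrix.cons_val_one,
        Matrix.head_cons, Matrix.empty_val', Matrix.cons_val_fin_one, Matrix.head_fin_const,
        Matrix.cons_val_two, Matrix.tail_cons, Matrix.cons_val_three,
        map_add, map_mul, map_sub, map_one, map_ofNat, hΦ, hx, hQ, NTlift_gen, ← hy, ← hG,
        AlgHom.commutes, ← hP, Fin.zero_eta, Fin.mk_one, Fin.reduceFinMk]
    · simp only [hG, Matrix.cons_val_zero]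
      linear_combination y 0 * hPk
    · simp only [hG, Matrix.cons_val_one, Matrix.head_cons, Matrix.cons_val_zero]
      linear_combination y 1 * hPk
    · simp only [hG, Matrix.cons_val_two, Matrix.tail_cons, Matrix.head_cons,
        Matrix.cons_val_zero, Matrix.cons_val_one]
      linear_combination (4 * P k * y 2 - 2 * P k * P a * y 0 - 2 * P k * P b * y 1) * hPtu
        + y 2 * hPk
    · simp only [hG, Matrix.cons_val_three, Matrix.tail_cons, Matrix.head_cons,
        Matrix.cons_val_zero, Matrix.cons_val_one]
      linear_combination (4 * P k * y 3 - 2 * P k * P c * y 0 - 2 * P k * P d * y 1) * hPsv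
        + y 3 * hPk
  have hc1 : ∀ i : Fin 4, Ψ (Φ (x i)) = x i := by
    intro i
    rw [hx, hΦ, NTlift_gen]
    exact hΨG i
  have hc2 : ∀ i : Fin 4, Φ (Ψ (y i)) = y i := by
    intro i
    rw [hy, hΨ, NTlift_gen]
    exact hΦH i
  have hΨΦ : Ψ.comp Φ = AlgHom.id F (NTAlg F T) := by
    apply Ideal.Quotient.algHom_ext
    apply MvPolynomial.algHom_ext
    intro i
    simp only [AlgHom.coe_comp, Ideal.Quotient.mkₐ_eq_mk, Function.comp_apply, AlgHom.coe_id,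
      id_eq]
    exact hc1 i
  have hΦΨ : Φ.comp Ψ = AlgHom.id F (NTAlg F S) := by
    apply Ideal.Quotient.algHom_ext
    apply MvPolynomial.algHom_ext
    intro i
    simp only [AlgHom.coe_comp, Ideal.Quotient.mkₐ_eq_mk, Function.comp_apply, AlgHom.coe_id,
      id_eq]
    exact hc2 i
  refine ⟨AlgEquiv.ofAlgHom Φ Ψ hΦΨ hΨΦ, ?_, ?_⟩
  · intro j
    have hmem : ∀ (r : F) (l : Fin 4),
        P r * NTgen F S l ∈ Submodule.span F (Set.range (NTgen F S)) := by
      intro r l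
      rw [hP, ← Algebra.smul_def]
      exact Submodule.smul_mem _ _ (Submodule.subset_span ⟨l, rfl⟩)
    show Φ (NTgen F T j) ∈ _
    rw [← hx, hx, hΦ, NTlift_gen]
    fin_cases j <;>
      simp only [hG, Matrix.cons_val_zero, Matrix.cons_val_one, Matrix.head_cons,
        Matrix.cons_val_two, Matrix.tail_cons, Matrix.cons_val_three, hy, Fin.zero_eta, Fin.mk_one, Fin.reduceFinMk]
    · rw [show (2 : NTAlg F S) = P 2 by rw [map_ofNat]]
      exact hmem 2 0
    · rw [show (2 : NTAlg F S) = P 2 by rw [map_ofNat]]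
      exact hmem 2 1
    · refine Submodule.add_mem _ (Submodule.add_mem _ ?_ ?_) ?_
      · rw [show (1 - P a * P t) = P (1 - a * t) by rw [map_sub, map_one, map_mul]]
        exact hmem _ 0
      · rw [show (1 - P b * P t) = P (1 - b * t) by rw [map_sub, map_one, map_mul]]
        exact hmem _ 1
      · rw [show (2 * P t : NTAlg F S) = P (2 * t) by rw [map_mul, map_ofNat]]
        exact hmem _ 2
    · refine Submodule.add_mem _ (Submodule.add_mem _ ?_ ?_) ?_
      · rw [show (1 - P c * P s) = P (1 - c * s) by rw [map_sub, map_one, map_mul]]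
        exact hmem _ 0
      · rw [show (1 - P d * P s) = P (1 - d * s) by rw [map_sub, map_one, map_mul]]
        exact hmem _ 1
      · rw [show (2 * P s : NTAlg F S) = P (2 * s) by rw [map_mul, map_ofNat]]
        exact hmem _ 3
  · intro j
    have hmem : ∀ (r : F) (l : Fin 4),
        Q r * NTgen F T l ∈ Submodule.span F (Set.range (NTgen F T)) := by
      intro r l
      rw [hQ, ← Algebra.smul_def]
      exact Submodule.smul_mem _ _ (Submodule.subset_span ⟨l, rfl⟩)
    have hsymm : (AlgEquiv.ofAlgHom Φ Ψ hΦΨ hΨΦ).symm (NTgen F S j) = Ψ (NTgen F S j) := by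
      have : (AlgEquiv.ofAlgHom Φ Ψ hΦΨ hΨΦ) (Ψ (NTgen F S j)) = NTgen F S j := by
        show Φ _ = _
        rw [← hy, hc2 j, hy]
      rw [AlgEquiv.symm_apply_eq]
      exact this.symm
    rw [hsymm, ← hy, hy, hΨ, NTlift_gen]
    fin_cases j <;>
      simp only [hH, Matrix.cons_val_zero, Matrix.cons_val_one, Matrix.head_cons,
        Matrix.cons_val_two, Matrix.tail_cons, Matrix.cons_val_three, hx, Fin.zero_eta, Fin.mk_one, Fin.reduceFinMk]
    · rw [show (2 * Q k : NTAlg F T) = Q (2 * k) by rw [map_mul, map_ofNat]]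
      exact hmem _ 0
    · rw [show (2 * Q k : NTAlg F T) = Q (2 * k) by rw [map_mul, map_ofNat]]
      exact hmem _ 1
    · refine Submodule.add_mem _ (Submodule.add_mem _ ?_ ?_) ?_
      · rw [show (Q k * (Q a - Q u)) = Q (k * (a - u)) by rw [map_mul, map_sub]]
        exact hmem _ 0
      · rw [show (Q k * (Q b - Q u)) = Q (k * (b - u)) by rw [map_mul, map_sub]]
        exact hmem _ 1
      · rw [show (2 * Q k * Q u : NTAlg F T) = Q (2 * k * u) by rw [map_mul, map_mul, map_ofNat]]
        exact hmem _ 2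
    · refine Submodule.add_mem _ (Submodule.add_mem _ ?_ ?_) ?_
      · rw [show (Q k * (Q c - Q v)) = Q (k * (c - v)) by rw [map_mul, map_sub]]
        exact hmem _ 0
      · rw [show (Q k * (Q d - Q v)) = Q (k * (d - v)) by rw [map_mul, map_sub]]
        exact hmem _ 1
      · rw [show (2 * Q k * Q v : NTAlg F T) = Q (2 * k * v) by rw [map_mul, map_mul, map_ofNat]]
        exact hmem _ 3
end
end

section
/- Let F be a field of characteristic ≠ 2 with v ∈ F, 2v + 1 ≠ 0. Set u = −v/(2v+1). Then the 4×4 matrix Γ with rows (1, 0, −v, 0), (0, (2v+1)², 2v²+v, 0), (0, 0, 2v+1, 0), (0, 0, 0, 2v+1) is invertible and satisfies, for all 1 ≤ r ≤ 4 and 1 ≤ i < k ≤ 4, the equation 2γ_{ir}γ_{kr} + γ_{kr}² s_{ki} = ∑_{j<r} t_{rj}(γ_{kj}γ_{kr} s_{ki} + γ_{kj}γ_{ir} + γ_{ij}γ_{kr}), where T has rows (0,0,0,0), (0,0,0,0), (1,1,0,0), (0,0,1,0) and S has rows (0,0,0,0), (0,0,0,0), (1,1,0,0), (u,v,1,0).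 -/
open MvPolynomial

noncomputable section

variable (F : Type) [Field F]

set_option maxHeartbeats 1000000 in
/-- The explicit matrix `Γ` is invertible and satisfies the key system of
equations for `T` (last row `(0,0,1,0)`) and `S` (last row `(u,v,1,0)`) when
`u = -v/(2v+1)`. -/
theorem stmt9 (h2 : (2 : F) ≠ 0) (v : F) (h2v : 2*v + 1 ≠ 0) (u : F)
    (hu : u = -v / (2*v + 1)) :
    IsUnit !![(1:F), 0, -v, 0; 0, (2*v+1)^2, 2*v^2 + v, 0; 0, 0, 2*v+1, 0; 0, 0, 0, 2*v+1] ∧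
    KeyEq F
      !![(0:F),0,0,0; 0,0,0,0; 1,1,0,0; 0,0,1,0]
      !![(0:F),0,0,0; 0,0,0,0; 1,1,0,0; u,v,1,0]
      !![(1:F), 0, -v, 0; 0, (2*v+1)^2, 2*v^2 + v, 0; 0, 0, 2*v+1, 0; 0, 0, 0, 2*v+1] := by
  subst hu
  constructor
  · rw [Matrix.isUnit_iff_isUnit_det]
    have hdet : (!![(1:F), 0, -v, 0; 0, (2*v+1)^2, 2*v^2 + v, 0; 0, 0, 2*v+1, 0; 0, 0, 0, 2*v+1]).det = (2*v+1)^4 := by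
      simp [Matrix.det_succ_row_zero, Fin.sum_univ_succ, Matrix.det_fin_three]
      ring
    rw [hdet]
    exact (IsUnit.mk0 _ h2v).pow 4
  · intro r i k hik
    rw [Finset.sum_filter]
    fin_cases r <;> fin_cases i <;> fin_cases k <;>
      first
      | exact absurd hik (by decide)
      | (simp (config := { decide := true }) only [Fin.sum_univ_four, Matrix.cons_val',
          Matrix.cons_val_zero, Matrix.cons_val_one, Matrix.head_cons, Matrix.empty_val',
          Matrix.cons_val_fin_one, Matrix.head_fin_const, if_true, if_false,
          Matrix.vecHead, Matrix.vecTail, Function.comp, Matrix.of_apply, Fin.isValue,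
          Fin.zero_eta, Fin.mk_one, Matrix.cons_val, Fin.reduceFinMk]
         try field_simp
         try ring)
end
end

section
/- Let F be a field of characteristic ≠ 2, n ≥ 5. Let T be the strictly lower triangular n×n matrix with t_{r1} = t_{r2} = 1 for 4 ≤ r ≤ n−1, t_{n1} = t_{n3} = 1, and all other entries 0; let S be the n×n matrix with s_{r1} = s_{r2} = 1 for 4 ≤ r ≤ n and all other entries 0. Then the graded algebras A(T) and A(S) are not isomorphic. -/
open MvPolynomial

noncomputable section

variable (F : Type) [Field F]

namespace NTaux
variable {F}
variable {n : ℕ}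

/-- Truncated model algebra: `F ⊕ V ⊕ W` with `M` a phantom parameter. -/
@[ext] structure Tr (F : Type) [Field F] {n : ℕ} (M : Matrix (Fin n) (Fin n) F) where
  a : F
  v : Fin n → F
  w : Fin n → Fin n → F

variable {M : Matrix (Fin n) (Fin n) F}

/-- reduced product of two degree-1 vectors -/
def mul2 (M : Matrix (Fin n) (Fin n) F) (v u : Fin n → F) : Fin n → Fin n → F :=
  fun i j => if i < j then v i * u j + v j * u i + v j * u j * M j i else 0

lemma mul2_comm (v u : Fin n → F) : mul2 M v u = mul2 M u v := by
  funext i j; simp only [mul2]; split <;> ring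

lemma mul2_add_left (v v' u : Fin n → F) :
    mul2 M (v + v') u = mul2 M v u + mul2 M v' u := by
  funext i j; simp only [mul2, Pi.add_apply]; split <;> ring

lemma mul2_smul_left (c : F) (v u : Fin n → F) :
    mul2 M (c • v) u = c • mul2 M v u := by
  funext i j; simp only [mul2, Pi.smul_apply, smul_eq_mul]; split <;> ring

lemma mul2_zero_left (u : Fin n → F) : mul2 M (0 : Fin n → F) u = 0 := by
  funext i j; simp only [mul2, Pi.zero_apply]; split <;> ring

instance : Add (Tr F M) := ⟨fun x y => ⟨x.a + y.a, x.v + y.v, x.w + y.w⟩⟩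
instance : Zero (Tr F M) := ⟨⟨0, 0, 0⟩⟩
instance : Neg (Tr F M) := ⟨fun x => ⟨-x.a, -x.v, -x.w⟩⟩
instance : One (Tr F M) := ⟨⟨1, 0, 0⟩⟩
instance : Mul (Tr F M) :=
  ⟨fun x y => ⟨x.a * y.a, x.a • y.v + y.a • x.v, x.a • y.w + y.a • x.w + mul2 M x.v y.v⟩⟩

@[simp] lemma add_def (x y : Tr F M) :
    x + y = ⟨x.a + y.a, x.v + y.v, x.w + y.w⟩ := rfl
@[simp] lemma mul_def (x y : Tr F M) :
    x * y = ⟨x.a * y.a, x.a • y.v + y.a • x.v, x.a • y.w + y.a • x.w + mul2 M x.v y.v⟩ := rfl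
@[simp] lemma zero_def : (0 : Tr F M) = ⟨0, 0, 0⟩ := rfl
@[simp] lemma one_def : (1 : Tr F M) = ⟨1, 0, 0⟩ := rfl
@[simp] lemma neg_def (x : Tr F M) : -x = ⟨-x.a, -x.v, -x.w⟩ := rfl

lemma mul2_add_right (v u u' : Fin n → F) :
    mul2 M v (u + u') = mul2 M v u + mul2 M v u' := by
  rw [mul2_comm, mul2_add_left, mul2_comm (M := M) u v, mul2_comm (M := M) u' v]

lemma mul2_smul_right (c : F) (v u : Fin n → F) :
    mul2 M v (c • u) = c • mul2 M v u := by
  rw [mul2_comm, mul2_smul_left, mul2_comm (M := M) u v]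

lemma mul2_zero_right (u : Fin n → F) : mul2 M u (0 : Fin n → F) = 0 := by
  rw [mul2_comm, mul2_zero_left]

instance : CommRing (Tr F M) where
  nsmul := nsmulRec
  zsmul := zsmulRec
  add_assoc x y z := by ext <;> simp <;> ring
  zero_add x := by ext <;> simp
  add_zero x := by ext <;> simp
  add_comm x y := by ext <;> simp <;> ring
  neg_add_cancel x := by ext <;> simp
  mul_comm x y := by
    ext i j <;> simp [mul2_comm (M := M) x.v y.v] <;> ring
  left_distrib x y z := by
    ext i j <;> simp [mul2_add_right] <;> ring
  right_distrib x y z := by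
    ext i j <;> simp [mul2_add_left] <;> ring
  zero_mul x := by ext i j <;> simp [mul2_zero_left]
  mul_zero x := by ext i j <;> simp [mul2_comm (M := M) x.v 0, mul2_zero_left]
  mul_assoc x y z := by
    ext i j <;>
      simp [mul2_add_left, mul2_add_right, mul2_smul_left, mul2_smul_right] <;> ring
  one_mul x := by ext i j <;> simp [mul2_zero_left]
  mul_one x := by ext i j <;> simp [mul2_comm (M := M) x.v 0, mul2_zero_left]



variable {M : Matrix (Fin n) (Fin n) F}

def algMap (M : Matrix (Fin n) (Fin n) F) : F →+* Tr F M where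
  toFun c := ⟨c, 0, 0⟩
  map_one' := rfl
  map_mul' x y := by ext <;> simp [mul2_zero_left]
  map_zero' := rfl
  map_add' x y := by ext <;> simp

instance : Algebra F (Tr F M) := (algMap M).toAlgebra

@[simp] lemma algebraMap_def (c : F) :
    (algebraMap F (Tr F M) c) = (⟨c, 0, 0⟩ : Tr F M) := rfl

@[simp] lemma smul_def (c : F) (x : Tr F M) : c • x = ⟨c * x.a, c • x.v, c • x.w⟩ := by
  show algebraMap F (Tr F M) c * x = _
  ext <;> simp [mul2_zero_left]

@[simp] lemma sub_def' (x y : Tr F M) : x - y = ⟨x.a - y.a, x.v - y.v, x.w - y.w⟩ := by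
  rw [sub_eq_add_neg]; ext <;> simp [sub_eq_add_neg]

def aHom (M : Matrix (Fin n) (Fin n) F) : Tr F M →+ F where
  toFun := Tr.a
  map_zero' := rfl
  map_add' _ _ := rfl

def vHom (M : Matrix (Fin n) (Fin n) F) : Tr F M →+ (Fin n → F) where
  toFun := Tr.v
  map_zero' := rfl
  map_add' _ _ := rfl

def wHom (M : Matrix (Fin n) (Fin n) F) : Tr F M →+ (Fin n → Fin n → F) where
  toFun := Tr.w
  map_zero' := rfl
  map_add' _ _ := rfl

@[simp] lemma a_sum {ι : Type*} (s : Finset ι) (f : ι → Tr F M) :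
    (∑ i ∈ s, f i).a = ∑ i ∈ s, (f i).a := map_sum (aHom M) f s

@[simp] lemma v_sum {ι : Type*} (s : Finset ι) (f : ι → Tr F M) :
    (∑ i ∈ s, f i).v = ∑ i ∈ s, (f i).v := map_sum (vHom M) f s

@[simp] lemma w_sum {ι : Type*} (s : Finset ι) (f : ι → Tr F M) :
    (∑ i ∈ s, f i).w = ∑ i ∈ s, (f i).w := map_sum (wHom M) f s

/-- the degree-one generators of `Tr`. -/
def gen (M : Matrix (Fin n) (Fin n) F) (i : Fin n) : Tr F M := ⟨0, Pi.single i 1, 0⟩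

/-- evaluation homomorphism -/
def φ (M : Matrix (Fin n) (Fin n) F) : MvPolynomial (Fin n) F →ₐ[F] Tr F M :=
  aeval (gen M)

lemma φ_rel (p : MvPolynomial (Fin n) F) (hp : p ∈ relSet F M) : φ M p = 0 := by
  obtain ⟨i, rfl⟩ := hp
  simp only [φ, map_sub, map_pow, map_sum, map_mul, aeval_X, aeval_C]
  ext <;>
    simp only [gen, pow_two, mul_def, mul_zero, zero_mul, smul_zero, zero_smul, zero_add,
      add_zero, Finset.sum_apply, algebraMap_def, sub_def', Tr.mk.injEq, smul_def,
      a_sum, v_sum, w_sum, Pi.zero_apply, Pi.smul_apply, smul_eq_mul, Pi.add_apply]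
  · simp
  · simp
  · rename_i a b
    simp only [Pi.sub_apply, zero_def, Pi.zero_apply]
    rw [sub_eq_zero]
    by_cases hb : b = i
    · subst hb
      rw [Finset.sum_apply, Finset.sum_apply]
      simp only [mul2, Pi.smul_apply, Pi.single_apply, smul_eq_mul]
      by_cases hab : a < b
      · rw [Finset.sum_eq_single a]
        · simp only [hab, if_true, if_neg (Fin.ne_of_lt hab)]
          have : ¬ b = a := fun h => absurd h.symm (ne_of_lt hab)
          simp [this]
        · intro j hj hja
          simp only [Finset.mem_filter] at hj
          have h2 : ¬ b = j := fun h => absurd (h ▸ hj.2) (lt_irrefl _)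
          simp [hab, if_neg (Ne.symm hja), h2, Fin.ne_of_lt hab]
        · intro h
          simp only [Finset.mem_filter, Finset.mem_univ, true_and] at h
          simp [hab] at h
      · simp [hab]
    · rw [Finset.sum_apply, Finset.sum_apply]
      simp only [mul2, Pi.smul_apply, Pi.single_apply, smul_eq_mul]
      by_cases hab : a < b
      · rw [Finset.sum_eq_zero]
        · simp [hab, hb]
        · intro j hj
          simp only [Finset.mem_filter, Finset.mem_univ, true_and] at hj
          have hja : ¬ (b = j ∧ a = i) := by
            rintro ⟨rfl, rfl⟩; exact absurd (hab.trans hj) (lt_irrefl _)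
          simp only [hab, if_true, if_neg hb]
          by_cases h1 : b = j
          · have : ¬ a = i := fun h => hja ⟨h1, h⟩
            simp [h1, this]
          · simp [h1]
      · simp [hab]

/-- The lift of `φ` to the quotient algebra. -/
def ψ (M : Matrix (Fin n) (Fin n) F) : NTAlg F M →ₐ[F] Tr F M :=
  Ideal.Quotient.liftₐ (Ideal.span (relSet F M)) (φ M) (by
    intro a ha
    refine Submodule.span_induction ?_ ?_ ?_ ?_ ha
    · exact fun p hp => φ_rel p hp
    · exact map_zero _
    · intro x y _ _ hx hy; rw [map_add, hx, hy, add_zero]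
    · intro c x _ hx
      rw [smul_eq_mul, map_mul, hx, mul_zero])

@[simp] lemma ψ_gen (M : Matrix (Fin n) (Fin n) F) (i : Fin n) :
    ψ M (NTgen F M i) = gen M i := by
  show φ M (X i) = gen M i
  simp [φ]

lemma sum_smul_gen (M : Matrix (Fin n) (Fin n) F) (c : Fin n → F) :
    (∑ j, c j • gen M j) = (⟨0, c, 0⟩ : Tr F M) := by
  ext
  · simp [gen]
  · rename_i l
    simp only [v_sum, Finset.sum_apply, smul_def, gen, Pi.smul_apply, smul_eq_mul,
      Pi.single_apply, mul_ite, mul_one, mul_zero]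
    simp [Finset.sum_ite_eq]
  · simp [gen]

lemma gen_rel (M : Matrix (Fin n) (Fin n) F) (k : Fin n) :
    (NTgen F M k) ^ 2 = ∑ j ∈ Finset.univ.filter (fun j => j < k),
      algebraMap F (NTAlg F M) (M k j) * NTgen F M j * NTgen F M k := by
  have hmem : (X k ^ 2 - ∑ j ∈ Finset.univ.filter (fun j => j < k),
      C (M k j) * X j * X k) ∈ Ideal.span (relSet F M) :=
    Ideal.subset_span ⟨k, rfl⟩
  have h0 := Ideal.Quotient.eq_zero_iff_mem.mpr hmem
  rw [map_sub, sub_eq_zero, map_sum, map_pow] at h0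
  have hC : ∀ c : F, (Ideal.Quotient.mk (Ideal.span (relSet F M))) (C c)
      = algebraMap F (NTAlg F M) c := by
    intro c
    rw [show (C c : MvPolynomial (Fin n) F) = algebraMap F _ c from rfl]
    exact (Ideal.Quotient.mkₐ F (Ideal.span (relSet F M))).commutes c
  calc (NTgen F M k) ^ 2 = _ := h0
    _ = _ := by
        refine Finset.sum_congr rfl (fun j hj => ?_)
        rw [map_mul, map_mul, hC]
        rfl

/-- One direction of the key equations. -/
lemma key_dir {T S : Matrix (Fin n) (Fin n) F} (e : NTAlg F T ≃ₐ[F] NTAlg F S)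
    (Γ : Matrix (Fin n) (Fin n) F)
    (hΓ : ∀ k, ∑ j, Γ k j • NTgen F S j = e (NTgen F T k)) :
    ∀ k i r : Fin n, i < r →
      Γ k i * Γ k r + Γ k r * Γ k i + Γ k r * Γ k r * S r i =
      ∑ j ∈ Finset.univ.filter (fun j => j < k),
        T k j * (Γ j i * Γ k r + Γ j r * Γ k i + Γ j r * Γ k r * S r i) := by
  intro k i r hir
  have hψ : ∀ l, ψ S (e (NTgen F T l)) = (⟨0, fun j => Γ l j, 0⟩ : Tr F S) := by
    intro l
    rw [← hΓ l, map_sum]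
    simp only [map_smul, ψ_gen]
    exact sum_smul_gen S _
  have h0 := congrArg (fun z => (ψ S (e z)).w i r) (gen_rel (F := F) T k)
  simp only [map_pow, map_sum, map_mul, AlgEquiv.commutes, AlgHom.commutes, hψ] at h0
  rw [pow_two] at h0
  simp only [mul_def, algebraMap_def, w_sum, Finset.sum_apply, mul_zero, zero_mul,
    smul_zero, zero_smul, zero_add, add_zero, one_mul, mul_one,
    mul2_smul_left, Pi.smul_apply, smul_eq_mul, smul_def] at h0
  simpa only [mul2, if_pos hir] using h0

/-- Invertibility relation between the two coefficient matrices. -/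
lemma key_inv {T S : Matrix (Fin n) (Fin n) F} (e : NTAlg F T ≃ₐ[F] NTAlg F S)
    (Γ Δ : Matrix (Fin n) (Fin n) F)
    (hΓ : ∀ k, ∑ j, Γ k j • NTgen F S j = e (NTgen F T k))
    (hΔ : ∀ k, ∑ j, Δ k j • NTgen F T j = e.symm (NTgen F S k)) :
    ∀ k l, ∑ j, Γ k j * Δ j l = if l = k then 1 else 0 := by
  intro k l
  have h1 : NTgen F T k = ∑ j, Γ k j • (∑ m, Δ j m • NTgen F T m) := by
    conv_lhs => rw [← e.symm_apply_apply (NTgen F T k), ← hΓ k]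
    rw [map_sum]
    refine Finset.sum_congr rfl (fun j hj => ?_)
    rw [map_smul, hΔ j]
  have h2 := congrArg (fun z => (ψ T z).v l) h1
  simp only [map_sum, map_smul, ψ_gen] at h2
  have h3 : ∀ j, (∑ m, Δ j m • gen T m) = (⟨0, fun m => Δ j m, 0⟩ : Tr F T) :=
    fun j => sum_smul_gen T _
  simp only [h3] at h2
  simp only [ψ_gen, gen, v_sum, Finset.sum_apply, smul_def, Pi.smul_apply,
    smul_eq_mul, Pi.single_apply] at h2
  rw [← h2]

/-- Structure of vectors whose square lies in the relation space. -/
lemma rowA {n : ℕ} {M' : Matrix (Fin n) (Fin n) F} {v : Fin n → F} (h2 : (2:F) ≠ 0)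
    (hlow : ∀ (i r : Fin n), (r:ℕ) < 3 → M' r i = 0)
    (hrow : ∀ r : Fin n, 3 ≤ (r:ℕ) → ∃ c1 c2 : Fin n, c1 < c2 ∧ ((c2:ℕ) < 3) ∧
      M' r c1 = 1 ∧ M' r c2 = 1 ∧ M' c2 c1 = 0)
    (hv : ∀ i r : Fin n, i < r → v i * v r + v r * v i + v r * v r * M' r i = 0) :
    (∀ r : Fin n, 3 ≤ (r:ℕ) → v r = 0) ∧ (∀ i r : Fin n, i ≠ r → v i * v r = 0) := by
  have part1 : ∀ r : Fin n, 3 ≤ (r:ℕ) → v r = 0 := by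
    intro r hr
    by_contra hvr
    obtain ⟨c1, c2, hc12, hc23, hm1, hm2, hm0⟩ := hrow r hr
    have hc2r : c2 < r := Fin.lt_def.mpr (lt_of_lt_of_le hc23 hr)
    have hc1r : c1 < r := lt_trans hc12 hc2r
    have h1 := hv c1 r hc1r; rw [hm1] at h1
    have hB := hv c2 r hc2r; rw [hm2] at hB
    have h3 := hv c1 c2 hc12; rw [hm0] at h3
    have hd : (2 * v r) * (v c1 - v c2) = 0 := by linear_combination h1 - hB
    have h2r : (2 : F) * v r ≠ 0 := mul_ne_zero h2 hvr
    have heq : v c1 = v c2 := by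
      rcases mul_eq_zero.mp hd with h | h
      · exact absurd h h2r
      · exact sub_eq_zero.mp h
    have hcc : v c1 * v c2 = 0 := by
      have hx : 2 * (v c1 * v c2) = 0 := by linear_combination h3
      rcases mul_eq_zero.mp hx with h | h
      · exact absurd h h2
      · exact h
    have hc10 : v c1 = 0 := by
      rw [heq] at hcc
      rw [heq]
      exact mul_self_eq_zero.mp hcc
    have hrr : v r * v r = 0 := by linear_combination h1 - (2 * v r) * hc10
    exact hvr (mul_self_eq_zero.mp hrr)
  have aux : ∀ i r : Fin n, i < r → v i * v r = 0 := by
    intro i r hir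
    by_cases hr3 : 3 ≤ (r:ℕ)
    · rw [part1 r hr3, mul_zero]
    · have hx := hv i r hir
      rw [hlow i r (by omega)] at hx
      have hy : 2 * (v i * v r) = 0 := by linear_combination hx
      rcases mul_eq_zero.mp hy with h | h
      · exact absurd h h2
      · exact h
  refine ⟨part1, fun i r hir => ?_⟩
  rcases lt_or_gt_of_ne hir with h | h
  · exact aux i r h
  · rw [mul_comm]; exact aux r i h

/-- The combinatorial core: no invertible change of basis matches the two relation spaces. -/
lemma main {n : ℕ} (hn : 5 ≤ n) (h2 : (2:F) ≠ 0)
    (T S Γ Δ : Matrix (Fin n) (Fin n) F)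
    (hT : ∀ i j : Fin n, T i j =
      if (3 ≤ (i : ℕ) ∧ (i : ℕ) ≤ n - 2 ∧ ((j : ℕ) = 0 ∨ (j : ℕ) = 1)) ∨
         ((i : ℕ) = n - 1 ∧ ((j : ℕ) = 0 ∨ (j : ℕ) = 2)) then (1 : F) else 0)
    (hS : ∀ i j : Fin n, S i j = if 3 ≤ (i : ℕ) ∧ ((j : ℕ) = 0 ∨ (j : ℕ) = 1)
      then (1 : F) else 0)
    (hGD : ∀ k l, ∑ j, Γ k j * Δ j l = if l = k then 1 else 0)
    (hE : ∀ k i r : Fin n, i < r →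
      Γ k i * Γ k r + Γ k r * Γ k i + Γ k r * Γ k r * S r i =
      ∑ j ∈ Finset.univ.filter (fun j => j < k),
        T k j * (Γ j i * Γ k r + Γ j r * Γ k i + Γ j r * Γ k r * S r i))
    (hE' : ∀ k i r : Fin n, i < r →
      Δ k i * Δ k r + Δ k r * Δ k i + Δ k r * Δ k r * T r i =
      ∑ j ∈ Finset.univ.filter (fun j => j < k),
        S k j * (Δ j i * Δ k r + Δ j r * Δ k i + Δ j r * Δ k r * T r i)) :
    False := by
  obtain ⟨e0, hv0⟩ : ∃ x : Fin n, (x:ℕ) = 0 := ⟨⟨0, by omega⟩, rfl⟩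
  obtain ⟨e1, hv1⟩ : ∃ x : Fin n, (x:ℕ) = 1 := ⟨⟨1, by omega⟩, rfl⟩
  obtain ⟨e2, hv2⟩ : ∃ x : Fin n, (x:ℕ) = 2 := ⟨⟨2, by omega⟩, rfl⟩
  have ne01 : e0 ≠ e1 := fun h => by rw [Fin.ext_iff, hv0, hv1] at h; omega
  have ne02 : e0 ≠ e2 := fun h => by rw [Fin.ext_iff, hv0, hv2] at h; omega
  have ne12 : e1 ≠ e2 := fun h => by rw [Fin.ext_iff, hv1, hv2] at h; omega
  have lt01 : e0 < e1 := Fin.lt_def.mpr (by omega)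
  have lt02 : e0 < e2 := Fin.lt_def.mpr (by omega)
  have lt12 : e1 < e2 := Fin.lt_def.mpr (by omega)
  -- vanishing rows and columns
  have hTrow0 : ∀ k : Fin n, (k:ℕ) < 3 → ∀ j, T k j = 0 := by
    intro k hk j; rw [hT]; apply if_neg; rintro (⟨h3, _⟩ | ⟨hk', _⟩) <;> omega
  have hSrow0 : ∀ k : Fin n, (k:ℕ) < 3 → ∀ j, S k j = 0 := by
    intro k hk j; rw [hS]; apply if_neg; rintro ⟨h3, _⟩; omega
  have hScol : ∀ k j : Fin n, 2 ≤ (j:ℕ) → S k j = 0 := by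
    intro k j hj; rw [hS]; apply if_neg; rintro ⟨_, h | h⟩ <;> omega
  have hTcol : ∀ k j : Fin n, 3 ≤ (j:ℕ) → T k j = 0 := by
    intro k j hj; rw [hT]; apply if_neg; rintro (⟨_, _, h | h⟩ | ⟨_, h | h⟩) <;> omega
  -- the distinguished rows for `rowA`
  have hrowS : ∀ r : Fin n, 3 ≤ (r:ℕ) → ∃ c1 c2 : Fin n, c1 < c2 ∧ ((c2:ℕ) < 3) ∧
      S r c1 = 1 ∧ S r c2 = 1 ∧ S c2 c1 = 0 := by
    intro r hr
    refine ⟨e0, e1, lt01, by omega, ?_, ?_, ?_⟩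
    · rw [hS]; exact if_pos ⟨hr, Or.inl hv0⟩
    · rw [hS]; exact if_pos ⟨hr, Or.inr hv1⟩
    · exact hSrow0 e1 (by omega) e0
  have hrowT : ∀ r : Fin n, 3 ≤ (r:ℕ) → ∃ c1 c2 : Fin n, c1 < c2 ∧ ((c2:ℕ) < 3) ∧
      T r c1 = 1 ∧ T r c2 = 1 ∧ T c2 c1 = 0 := by
    intro r hr
    by_cases hr2 : (r:ℕ) ≤ n - 2
    · refine ⟨e0, e1, lt01, by omega, ?_, ?_, hTrow0 e1 (by omega) e0⟩
      · rw [hT]; exact if_pos (Or.inl ⟨hr, hr2, Or.inl hv0⟩)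
      · rw [hT]; exact if_pos (Or.inl ⟨hr, hr2, Or.inr hv1⟩)
    · have hrn : (r:ℕ) = n - 1 := by have := r.isLt; omega
      refine ⟨e0, e2, lt02, by omega, ?_, ?_, hTrow0 e2 (by omega) e0⟩
      · rw [hT]; exact if_pos (Or.inr ⟨hrn, Or.inl hv0⟩)
      · rw [hT]; exact if_pos (Or.inr ⟨hrn, Or.inr hv2⟩)
  -- structure of the first three rows of Γ and Δ
  have AΓ : ∀ k : Fin n, (k:ℕ) < 3 →
      (∀ r : Fin n, 3 ≤ (r:ℕ) → Γ k r = 0) ∧ (∀ i r : Fin n, i ≠ r → Γ k i * Γ k r = 0) := by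
    intro k hk
    refine rowA h2 (fun i r hr => hSrow0 r hr i) hrowS ?_
    intro i r hir
    have h := hE k i r hir
    rw [Finset.sum_eq_zero (fun j _ => by rw [hTrow0 k hk j, zero_mul])] at h
    exact h
  have AΔ : ∀ k : Fin n, (k:ℕ) < 3 →
      (∀ r : Fin n, 3 ≤ (r:ℕ) → Δ k r = 0) ∧ (∀ i r : Fin n, i ≠ r → Δ k i * Δ k r = 0) := by
    intro k hk
    refine rowA h2 (fun i r hr => hTrow0 r hr i) hrowT ?_
    intro i r hir
    have h := hE' k i r hir
    rw [Finset.sum_eq_zero (fun j _ => by rw [hSrow0 k hk j, zero_mul])] at h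
    exact h
  -- supports of the first three rows of Γ
  have support : ∀ k : Fin n, (k:ℕ) < 3 →
      ∃ m : Fin n, (m:ℕ) < 3 ∧ Γ k m ≠ 0 ∧ ∀ c, c ≠ m → Γ k c = 0 := by
    intro k hk
    have hnz : ∃ m, Γ k m ≠ 0 := by
      by_contra hz
      push_neg at hz
      have h1 := hGD k k
      rw [if_pos rfl, Finset.sum_eq_zero (fun j _ => by rw [hz j, zero_mul])] at h1
      exact zero_ne_one h1
    obtain ⟨m, hm⟩ := hnz
    have hm3 : (m:ℕ) < 3 := by
      by_contra hm3
      exact hm ((AΓ k hk).1 m (by omega))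
    refine ⟨m, hm3, hm, fun c hc => ?_⟩
    rcases mul_eq_zero.mp ((AΓ k hk).2 c m hc) with h | h
    · exact h
    · exact absurd h hm
  -- supports are distinct
  have distinct : ∀ k k' m : Fin n, k ≠ k' → Γ k m ≠ 0 → (∀ c, c ≠ m → Γ k c = 0) →
      Γ k' m ≠ 0 → (∀ c, c ≠ m → Γ k' c = 0) → False := by
    intro k k' m hkk hkm hkz hk'm hk'z
    have h1 : Γ k m * Δ m k' = 0 := by
      have h := hGD k k'
      rw [if_neg (fun h => hkk h.symm),
        Finset.sum_eq_single m (fun j _ hj => by rw [hkz j hj, zero_mul])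
          (fun hm => absurd (Finset.mem_univ m) hm)] at h
      exact h
    have hΔ0 : Δ m k' = 0 := by
      rcases mul_eq_zero.mp h1 with h | h
      · exact absurd h hkm
      · exact h
    have hB := hGD k' k'
    rw [if_pos rfl,
      Finset.sum_eq_single m (fun j _ hj => by rw [hk'z j hj, zero_mul])
        (fun hm => absurd (Finset.mem_univ m) hm), hΔ0, mul_zero] at hB
    exact zero_ne_one hB
  -- rows ≥ 3 of Γ have a nonzero entry in columns ≥ 3
  have supp3 : ∀ k : Fin n, 3 ≤ (k:ℕ) → ∃ m : Fin n, 3 ≤ (m:ℕ) ∧ Γ k m ≠ 0 := by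
    intro k hk
    by_contra hz
    push_neg at hz
    have h1 := hGD k k
    rw [if_pos rfl, Finset.sum_eq_zero (fun j _ => by
      by_cases hj3 : (j:ℕ) < 3
      · rw [(AΔ j hj3).1 k hk, mul_zero]
      · rw [hz j (by omega), zero_mul])] at h1
    exact zero_ne_one h1
  -- the key step
  have keystep : ∀ k a b ma mb : Fin n, 3 ≤ (k:ℕ) →
      (∀ j, T k j = if j = a ∨ j = b then 1 else 0) → a ≠ b → (a:ℕ) < 3 → (b:ℕ) < 3 →
      (ma:ℕ) < 3 → Γ a ma ≠ 0 → (∀ c, c ≠ ma → Γ a c = 0) →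
      (mb:ℕ) < 3 → Γ b mb ≠ 0 → (∀ c, c ≠ mb → Γ b c = 0) →
      ma ≠ mb → (ma:ℕ) ≠ 2 ∧ (mb:ℕ) ≠ 2 := by
    intro k a b ma mb hk hsupp hab ha3 hb3 hma3 hmaNe hmaZ hmb3 hmbNe hmbZ hmamb
    obtain ⟨m, hm3, hlam⟩ := supp3 k hk
    have hΓam : Γ a m = 0 := hmaZ m (fun h => by rw [Fin.ext_iff] at h; omega)
    have hΓbm : Γ b m = 0 := hmbZ m (fun h => by rw [Fin.ext_iff] at h; omega)
    have hred : ∀ i r : Fin n, i < r →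
        Γ k i * Γ k r + Γ k r * Γ k i + Γ k r * Γ k r * S r i =
        (Γ a i * Γ k r + Γ a r * Γ k i + Γ a r * Γ k r * S r i) +
        (Γ b i * Γ k r + Γ b r * Γ k i + Γ b r * Γ k r * S r i) := by
      intro i r hir
      have h := hE k i r hir
      rw [h]
      have hsub : ({a, b} : Finset (Fin n)) ⊆ Finset.univ.filter (fun j => j < k) := by
        intro x hx
        rcases Finset.mem_insert.mp hx with rfl | hx
        · exact Finset.mem_filter.mpr ⟨Finset.mem_univ _, Fin.lt_def.mpr (by omega)⟩
        · rw [Finset.mem_singleton.mp hx]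
          exact Finset.mem_filter.mpr ⟨Finset.mem_univ _, Fin.lt_def.mpr (by omega)⟩
      rw [← Finset.sum_subset hsub (fun x _ hxab => by
        rw [hsupp x, if_neg (fun hor => hxab (by
          rcases hor with rfl | rfl
          · exact Finset.mem_insert_self _ _
          · exact Finset.mem_insert_of_mem (Finset.mem_singleton_self _)))]
        exact zero_mul _)]
      rw [Finset.sum_pair hab, hsupp a, if_pos (Or.inl rfl), hsupp b, if_pos (Or.inr rfl),
        one_mul, one_mul]
    have hw : ∀ i : Fin n, (i:ℕ) < 3 → Γ a i + Γ b i = 2 * Γ k i + Γ k m * S m i := by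
      intro i hi
      have hir : i < m := Fin.lt_def.mpr (by omega)
      have h := hred i m hir
      rw [hΓam, hΓbm] at h
      apply mul_right_cancel₀ hlam
      linear_combination -h
    have hII : ∀ i r : Fin n, (r:ℕ) < 3 → i < r →
        Γ k i * Γ k r + Γ k r * Γ k i =
        Γ a i * Γ k r + Γ a r * Γ k i + Γ b i * Γ k r + Γ b r * Γ k i := by
      intro i r hr hir
      have h := hred i r hir
      rw [hSrow0 r (by omega) i] at h
      linear_combination h
    have key : ∀ i r : Fin n, (i:ℕ) < 3 → (r:ℕ) < 3 → i < r →
        (Γ a i + Γ b i) * (Γ a r + Γ b r) = Γ k m * Γ k m * (S m i * S m r) := by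
      intro i r hi hr hir
      linear_combination (Γ a r + Γ b r - 2 * Γ k r) * (hw i hi) +
        (Γ k m * S m i) * (hw r hr) - 2 * (hII i r hr hir)
    have hSm0 : S m e0 = 1 := by rw [hS]; exact if_pos ⟨hm3, Or.inl hv0⟩
    have hSm1 : S m e1 = 1 := by rw [hS]; exact if_pos ⟨hm3, Or.inr hv1⟩
    have hSm2 : S m e2 = 0 := by rw [hS]; apply if_neg; rintro ⟨_, h | h⟩ <;> omega
    have h01 : (Γ a e0 + Γ b e0) * (Γ a e1 + Γ b e1) = Γ k m * Γ k m := by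
      have h := key e0 e1 (by omega) (by omega) lt01
      rw [hSm0, hSm1] at h
      linear_combination h
    have h02 : (Γ a e0 + Γ b e0) * (Γ a e2 + Γ b e2) = 0 := by
      have h := key e0 e2 (by omega) (by omega) lt02
      rw [hSm0, hSm2] at h
      linear_combination h
    have hW0 : Γ a e0 + Γ b e0 ≠ 0 := by
      intro h
      rw [h, zero_mul] at h01
      exact hlam (mul_self_eq_zero.mp h01.symm)
    have hW2 : Γ a e2 + Γ b e2 = 0 := by
      rcases mul_eq_zero.mp h02 with h | h
      · exact absurd h hW0
      · exact h
    constructor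
    · intro hma2
      have hmae2 : ma = e2 := Fin.ext (by omega)
      have hbz : Γ b e2 = 0 := hmbZ e2 (fun h => hmamb (by rw [hmae2, h]))
      rw [hbz, add_zero] at hW2
      exact hmaNe (by rw [hmae2]; exact hW2)
    · intro hmb2
      have hmbe2 : mb = e2 := Fin.ext (by omega)
      have haz : Γ a e2 = 0 := hmaZ e2 (fun h => hmamb (by rw [hmbe2, h]))
      rw [haz, zero_add] at hW2
      exact hmbNe (by rw [hmbe2]; exact hW2)
  -- finale
  obtain ⟨m0, hm03, hm0Ne, hm0Z⟩ := support e0 (by omega)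
  obtain ⟨m1, hm13, hm1Ne, hm1Z⟩ := support e1 (by omega)
  obtain ⟨m2, hm23, hm2Ne, hm2Z⟩ := support e2 (by omega)
  have d01 : m0 ≠ m1 := fun h =>
    distinct e0 e1 m0 ne01 hm0Ne hm0Z (by rw [h]; exact hm1Ne) (by rw [h]; exact hm1Z)
  have d02 : m0 ≠ m2 := fun h =>
    distinct e0 e2 m0 ne02 hm0Ne hm0Z (by rw [h]; exact hm2Ne) (by rw [h]; exact hm2Z)
  have d12 : m1 ≠ m2 := fun h =>
    distinct e1 e2 m1 ne12 hm1Ne hm1Z (by rw [h]; exact hm2Ne) (by rw [h]; exact hm2Z)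
  obtain ⟨i3, hvi3⟩ : ∃ x : Fin n, (x:ℕ) = 3 := ⟨⟨3, by omega⟩, rfl⟩
  obtain ⟨iN, hviN⟩ : ∃ x : Fin n, (x:ℕ) = n - 1 := ⟨⟨n - 1, by omega⟩, rfl⟩
  have hsupp3 : ∀ j, T i3 j = if j = e0 ∨ j = e1 then 1 else 0 := by
    intro j
    rw [hT]
    refine if_congr ?_ rfl rfl
    rw [Fin.ext_iff (b := e0), Fin.ext_iff (b := e1), hv0, hv1]
    constructor
    · rintro (⟨_, _, h⟩ | ⟨hx, h⟩) <;> omega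
    · intro h
      exact Or.inl ⟨by omega, by omega, by omega⟩
  have hsuppN : ∀ j, T iN j = if j = e0 ∨ j = e2 then 1 else 0 := by
    intro j
    rw [hT]
    refine if_congr ?_ rfl rfl
    rw [Fin.ext_iff (b := e0), Fin.ext_iff (b := e2), hv0, hv2]
    constructor
    · rintro (⟨_, hle, h⟩ | ⟨hx, h⟩) <;> omega
    · intro h
      exact Or.inr ⟨by omega, by omega⟩
  obtain ⟨hA0, hA1⟩ := keystep i3 e0 e1 m0 m1 (by omega) hsupp3 ne01 (by omega) (by omega)
    hm03 hm0Ne hm0Z hm13 hm1Ne hm1Z d01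
  obtain ⟨hB0, hB2⟩ := keystep iN e0 e2 m0 m2 (by omega) hsuppN ne02 (by omega) (by omega)
    hm03 hm0Ne hm0Z hm23 hm2Ne hm2Z d02
  have dv01 : (m0:ℕ) ≠ (m1:ℕ) := fun h => d01 (Fin.ext h)
  have dv02 : (m0:ℕ) ≠ (m2:ℕ) := fun h => d02 (Fin.ext h)
  have dv12 : (m1:ℕ) ≠ (m2:ℕ) := fun h => d12 (Fin.ext h)
  omega

end NTaux

/-- For `n ≥ 5`, the matrix `T` (rows `4..n-1` equal to `(1,1,0,…)`, row `n`
equal to `(1,0,1,0,…)`, 1-based) and the matrix `S` (rows `4..n` equal to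
`(1,1,0,…)`) give non-isomorphic graded algebras. -/
theorem stmt17 (h2 : (2 : F) ≠ 0) {n : ℕ} (hn : 5 ≤ n) :
    ¬ NTIso F
        (Matrix.of fun i j : Fin n =>
          if (3 ≤ (i : ℕ) ∧ (i : ℕ) ≤ n - 2 ∧ ((j : ℕ) = 0 ∨ (j : ℕ) = 1)) ∨
             ((i : ℕ) = n - 1 ∧ ((j : ℕ) = 0 ∨ (j : ℕ) = 2)) then (1 : F) else 0)
        (Matrix.of fun i j : Fin n =>
          if 3 ≤ (i : ℕ) ∧ ((j : ℕ) = 0 ∨ (j : ℕ) = 1) then (1 : F) else 0) := by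
  rintro ⟨e, he1, he2⟩
  choose Γ hΓ using fun k => (Submodule.mem_span_range_iff_exists_fun F).mp (he1 k)
  choose Δ hΔ using fun k => (Submodule.mem_span_range_iff_exists_fun F).mp (he2 k)
  exact NTaux.main hn h2 _ _ Γ Δ (fun i j => rfl) (fun i j => rfl)
    (NTaux.key_inv e Γ Δ hΓ hΔ) (NTaux.key_dir e Γ hΓ) (NTaux.key_dir e.symm Δ hΔ)
end
end
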